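/- arXiv:2112.14615 — 2 statements merged into one kernel-verified Lean document; each statement's English description precedes it below -/
import Mathlib

section
/- Let K be a circularly ordered set whose circular topology is compact and L a linearly ordered set whose order (interval) topology is compact. Define the lexicographic circular order on K × L by declaring, for pairwise distinct triples, [(a,x),(b,y),(c,z)] iff one of the following holds: (i) sbtw a b c in K; (ii) a = b ≠ c and x < y; (iii) b = c ≠ a and y < z; (iv) c = a ≠ b and z < x; (v) a = b = c and (x < y < z or y < z < x or z < x < y). Then K × L, equipped with the circular topology of this lexicographic circular order, is compact. -/
open Set Filter Topology TopologicalSpace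


/-- The closed interval `{x | R a x b} ∪ {a, b}` of a ternary relation `R`. -/
def ternIcc {X : Type*} (R : X → X → X → Prop) (a b : X) : Set X :=
  {x | R a x b} ∪ {a, b}

/-- The interval topology of a ternary (circular-order-like) relation `R`: the topology
generated by the complements of the closed intervals. -/
def ternaryTopology {X : Type*} (R : X → X → X → Prop) : TopologicalSpace X :=
  TopologicalSpace.generateFrom {s : Set X | ∃ a b : X, s = (ternIcc R a b)ᶜ}

/-- The circular (interval) topology of a circular order. -/
def circularTopology (X : Type*) [CircularOrder X] : TopologicalSpace X :=
  ternaryTopology (fun a b c : X => sbtw a b c)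

/-- The strict betweenness relation of the lexicographic circular order on the product
`K × L` of a circularly ordered set `K` and a linearly ordered set `L`. -/
def lexSbtw (K L : Type*) [CircularOrder K] [LinearOrder L] :
    K × L → K × L → K × L → Prop := fun p q r =>
  p ≠ q ∧ q ≠ r ∧ r ≠ p ∧
    (sbtw p.1 q.1 r.1 ∨
      (p.1 = q.1 ∧ q.1 ≠ r.1 ∧ p.2 < q.2) ∨
      (q.1 = r.1 ∧ r.1 ≠ p.1 ∧ q.2 < r.2) ∨
      (r.1 = p.1 ∧ p.1 ≠ q.1 ∧ r.2 < p.2) ∨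
      (p.1 = q.1 ∧ q.1 = r.1 ∧
        ((p.2 < q.2 ∧ q.2 < r.2) ∨ (q.2 < r.2 ∧ r.2 < p.2) ∨ (r.2 < p.2 ∧ p.2 < q.2))))

lemma mem_compl_ternIcc {X : Type*} {R : X → X → X → Prop} {P Q p : X} :
    p ∈ (ternIcc R P Q)ᶜ ↔ ¬ R P p Q ∧ p ≠ P ∧ p ≠ Q := by
  simp only [ternIcc, mem_compl_iff, mem_union, mem_setOf_eq, mem_insert_iff,
    mem_singleton_iff, not_or]

lemma le_nhds_ternaryTopology {X : Type*} {R : X → X → X → Prop} {F : Filter X} {q : X}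
    (h : ∀ P Q : X, q ∈ (ternIcc R P Q)ᶜ → (ternIcc R P Q)ᶜ ∈ F) :
    F ≤ @nhds X (ternaryTopology R) q := by
  have : Tendsto id F (@nhds X (ternaryTopology R) q) := by
    rw [show ternaryTopology R
        = generateFrom {s : Set X | ∃ a b : X, s = (ternIcc R a b)ᶜ} from rfl,
      tendsto_nhds_generateFrom_iff]
    rintro s ⟨P, Q, rfl⟩ hq
    exact h P Q hq
  exact this

section Circ
variable {K : Type*} [CircularOrder K]

lemma sbtw_ne₁ {a b c : K} (h : sbtw a b c) : a ≠ b := fun e => sbtw_irrefl_left (e ▸ h)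
lemma sbtw_ne₂ {a b c : K} (h : sbtw a b c) : b ≠ c := fun e => sbtw_irrefl_right (e ▸ h)
lemma sbtw_ne₃ {a b c : K} (h : sbtw a b c) : c ≠ a := fun e => sbtw_irrefl_left_right (e ▸ h)

lemma sbtw_total' {a b x : K} (hxa : x ≠ a) (hxb : x ≠ b) (hab : a ≠ b) :
    sbtw a x b ∨ sbtw b x a := by
  rcases btw_total a x b with h | h
  · by_cases h' : btw b x a
    · rcases btw_antisymm h h' with e | e | e
      · exact absurd e.symm hxa
      · exact absurd e hxb
      · exact absurd e.symm hab
    · exact Or.inl (sbtw_of_btw_not_btw h h')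
  · by_cases h' : btw a x b
    · rcases btw_antisymm h' h with e | e | e
      · exact absurd e.symm hxa
      · exact absurd e hxb
      · exact absurd e.symm hab
    · exact Or.inr (sbtw_of_btw_not_btw h h')

lemma sbtw_of_not_sbtw {a b x : K} (h : ¬ sbtw a x b) (hxa : x ≠ a) (hxb : x ≠ b)
    (hab : a ≠ b) : sbtw b x a := ((sbtw_total' hxa hxb hab).resolve_left h)

lemma compl_ternIcc_sbtw {a b : K} (hab : a ≠ b) :
    (ternIcc (fun p q r : K => sbtw p q r) a b)ᶜ = {x | sbtw b x a} := by
  ext x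
  rw [mem_compl_ternIcc]
  constructor
  · rintro ⟨h1, h2, h3⟩
    exact sbtw_of_not_sbtw h1 h2 h3 hab
  · intro h
    exact ⟨fun h' => sbtw_asymm h' h, fun e => sbtw_irrefl_right (e ▸ h),
      fun e => sbtw_irrefl_left (e ▸ h)⟩

lemma arc_mem_nhds {a b k : K} (h : sbtw b k a) :
    {x | sbtw b x a} ∈ @nhds K (circularTopology K) k := by
  have hab : a ≠ b := (sbtw_ne₃ h)
  have ho : @IsOpen K (circularTopology K) {x | sbtw b x a} := by
    rw [← compl_ternIcc_sbtw hab]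
    exact isOpen_generateFrom_of_mem ⟨a, b, rfl⟩
  letI := circularTopology K
  exact ho.mem_nhds h

lemma ternIcc_sbtw_self (a : K) : ternIcc (fun p q r : K => sbtw p q r) a a = {a} := by
  ext x
  simp [ternIcc, sbtw_irrefl_left_right]

lemma compl_singleton_mem_nhds_circ {a k : K} (h : k ≠ a) :
    {x : K | x ≠ a} ∈ @nhds K (circularTopology K) k := by
  have ho : @IsOpen K (circularTopology K) {x : K | x ≠ a} := by
    have : {x : K | x ≠ a} = (ternIcc (fun p q r : K => sbtw p q r) a a)ᶜ := by
      rw [ternIcc_sbtw_self]; rfl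
    rw [this]
    exact isOpen_generateFrom_of_mem ⟨a, a, rfl⟩
  letI := circularTopology K
  exact ho.mem_nhds h

lemma not_neg_and_pos (G : Ultrafilter K) (k : K)
    (hGk : ↑G ≤ @nhds K (circularTopology K) k) {b₁ b₂ : K} (h1 : b₁ ≠ k) (h2 : b₂ ≠ k)
    (hneg : {c : K | sbtw b₁ c k} ∈ G) (hpos : {c : K | sbtw k c b₂} ∈ G) : False := by
  by_cases hb : b₁ = b₂
  · subst hb
    obtain ⟨c, hc1, hc2⟩ := G.nonempty_of_mem (inter_mem hneg hpos)
    exact sbtw_asymm hc1 hc2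
  · rcases sbtw_total' (x := k) (a := b₁) (b := b₂) (Ne.symm h1) (Ne.symm h2) hb with hc | hc
    · obtain ⟨c, hc1, hc2⟩ := G.nonempty_of_mem (inter_mem hneg hpos)
      exact sbtw_asymm hc (sbtw_cyclic_left (sbtw_trans_left hc1 (sbtw_cyclic_left hc2)))
    · have hU : {c : K | sbtw b₂ c b₁} ∈ G := hGk (arc_mem_nhds hc)
      obtain ⟨c, hU', hc1, hc2⟩ := G.nonempty_of_mem (inter_mem hU (inter_mem hneg hpos))
      have h1' : sbtw b₂ k c := sbtw_cyclic_left (sbtw_cyclic_left hc2)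
      have h2' : sbtw k b₁ c := sbtw_cyclic_left (sbtw_cyclic_left hc1)
      exact sbtw_asymm (sbtw_trans_left h1' h2') (sbtw_cyclic_left hU')

lemma sides_dichotomy (G : Ultrafilter K) (k : K)
    (hGk : ↑G ≤ @nhds K (circularTopology K) k) (hk : {c : K | c ≠ k} ∈ G) :
    (∀ b, b ≠ k → {c : K | sbtw b c k} ∈ G) ∨ (∀ b, b ≠ k → {c : K | sbtw k c b} ∈ G) := by
  have hsplit : ∀ b, b ≠ k → {c : K | sbtw b c k} ∈ G ∨ {c : K | sbtw k c b} ∈ G := by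
    intro b hb
    have hcb : {c : K | c ≠ b} ∈ G := hGk (compl_singleton_mem_nhds_circ (Ne.symm hb))
    have hsub : {c : K | c ≠ k} ∩ {c : K | c ≠ b} ⊆ {c : K | sbtw b c k} ∪ {c | sbtw k c b} := by
      rintro c ⟨hc1, hc2⟩
      rcases sbtw_total' (x := c) (a := k) (b := b) hc1 hc2 (Ne.symm hb) with h | h
      · exact Or.inr h
      · exact Or.inl h
    exact Ultrafilter.union_mem_iff.mp (mem_of_superset (inter_mem hk hcb) hsub)
  by_cases hex : ∃ b₁, b₁ ≠ k ∧ {c : K | sbtw b₁ c k} ∈ G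
  · obtain ⟨b₁, hb₁, hneg⟩ := hex
    left; intro b hb
    rcases hsplit b hb with h | h
    · exact h
    · exact absurd (not_neg_and_pos G k hGk hb₁ hb hneg h) not_false
  · right; intro b hb
    rcases hsplit b hb with h | h
    · exact absurd ⟨b, hb, h⟩ hex
    · exact h

end Circ

section LexChar
variable {K L : Type*} [CircularOrder K] [LinearOrder L]

lemma lexSbtw_fiber {k : K} {x t y : L} :
    lexSbtw K L (k, x) (k, t) (k, y) ↔
      ((x < t ∧ t < y) ∨ (t < y ∧ y < x) ∨ (y < x ∧ x < t)) := by
  constructor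
  · rintro ⟨-, -, -, h | h | h | h | h⟩
    · exact absurd h sbtw_irrefl_left_right
    · exact absurd rfl h.2.1
    · exact absurd rfl h.2.1
    · exact absurd rfl h.2.1
    · exact h.2.2
  · intro h
    have hxt : x ≠ t := by
      rcases h with ⟨h1, h2⟩ | ⟨h1, h2⟩ | ⟨h1, h2⟩
      exacts [h1.ne, (h1.trans h2).ne', h2.ne]
    have hty : t ≠ y := by
      rcases h with ⟨h1, h2⟩ | ⟨h1, h2⟩ | ⟨h1, h2⟩
      exacts [h2.ne, h1.ne, (h1.trans h2).ne']
    have hyx : y ≠ x := by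
      rcases h with ⟨h1, h2⟩ | ⟨h1, h2⟩ | ⟨h1, h2⟩
      exacts [(h1.trans h2).ne', h2.ne, h1.ne]
    exact ⟨fun e => hxt (congrArg Prod.snd e), fun e => hty (congrArg Prod.snd e),
      fun e => hyx (congrArg Prod.snd e), Or.inr (Or.inr (Or.inr (Or.inr ⟨rfl, rfl, h⟩)))⟩

lemma lexSbtw_left_fiber {k b : K} (hkb : k ≠ b) {x t y : L} :
    lexSbtw K L (k, x) (k, t) (b, y) ↔ x < t := by
  constructor
  · rintro ⟨-, -, -, h | h | h | h | h⟩
    · exact absurd h sbtw_irrefl_left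
    · exact h.2.2
    · exact absurd h.1 hkb
    · exact absurd h.1.symm hkb
    · exact absurd h.2.1 hkb
  · intro h
    exact ⟨fun e => h.ne (congrArg Prod.snd e), fun e => hkb (congrArg Prod.fst e),
      fun e => hkb ((congrArg Prod.fst e).symm), Or.inr (Or.inl ⟨rfl, hkb, h⟩)⟩

lemma lexSbtw_right_fiber {a k : K} (hak : a ≠ k) {x t y : L} :
    lexSbtw K L (a, x) (k, t) (k, y) ↔ t < y := by
  constructor
  · rintro ⟨-, -, -, h | h | h | h | h⟩
    · exact absurd h sbtw_irrefl_right
    · exact absurd h.1 hak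
    · exact h.2.2
    · exact absurd h.1.symm hak
    · exact absurd h.1 hak
  · intro h
    exact ⟨fun e => hak (congrArg Prod.fst e), fun e => h.ne (congrArg Prod.snd e),
      fun e => hak ((congrArg Prod.fst e).symm), Or.inr (Or.inr (Or.inl ⟨rfl, Ne.symm hak, h⟩))⟩

lemma lexSbtw_mid_off {u v : K} {x y : L} {p : K × L} (hu : p.1 ≠ u) (hv : p.1 ≠ v) :
    lexSbtw K L (u, x) p (v, y) ↔ (sbtw u p.1 v ∨ (v = u ∧ y < x)) := by
  constructor
  · rintro ⟨-, -, -, h | h | h | h | h⟩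
    · exact Or.inl h
    · exact absurd h.1.symm hu
    · exact absurd h.1 hv
    · exact Or.inr ⟨h.1, h.2.2⟩
    · exact absurd h.1.symm hu
  · rintro (h | ⟨hvu, hyx⟩)
    · exact ⟨fun e => hu ((congrArg Prod.fst e).symm), fun e => hv (congrArg Prod.fst e),
        fun e => sbtw_ne₃ h (congrArg Prod.fst e), Or.inl h⟩
    · exact ⟨fun e => hu ((congrArg Prod.fst e).symm), fun e => hv (congrArg Prod.fst e),
        fun e => hyx.ne (congrArg Prod.snd e),
        Or.inr (Or.inr (Or.inr (Or.inl ⟨hvu, Ne.symm hu, hyx⟩)))⟩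

lemma ternIcc_lexSbtw_self (P : K × L) : ternIcc (lexSbtw K L) P P = {P} := by
  ext p
  simp only [ternIcc, mem_union, mem_setOf_eq, mem_insert_iff, mem_singleton_iff]
  constructor
  · rintro (h | h | h)
    · exact absurd rfl h.2.2.1
    · exact h
    · exact h
  · exact fun h => Or.inr (Or.inl h)

end LexChar

/-- If `K` is a circularly ordered set whose circular topology is compact and
`L` is a linearly ordered set whose order topology is compact, then `K × L` with the circular
topology of the lexicographic circular order is compact. -/
theorem lex_circular_product_compact
    {K L : Type*} [CircularOrder K] [LinearOrder L]
    (hK : @CompactSpace K (circularTopology K))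
    (hL : @CompactSpace L (Preorder.topology L)) :
    @CompactSpace (K × L) (ternaryTopology (lexSbtw K L)) := by
  classical
  letI tL : TopologicalSpace L := Preorder.topology L
  haveI : OrderTopology L := ⟨rfl⟩
  haveI hLcs : CompactSpace L := hL
  have hKc : ∀ G : Ultrafilter K, ∃ k : K, ↑G ≤ @nhds K (circularTopology K) k := by
    intro G
    have h1 : @IsCompact K (circularTopology K) univ :=
      @CompactSpace.isCompact_univ K (circularTopology K) hK
    rcases (@isCompact_iff_ultrafilter_le_nhds K (circularTopology K) univ).mp h1 G
      (le_principal_iff.mpr univ_mem) with ⟨k, -, h⟩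
    exact ⟨k, h⟩
  have hLc : ∀ H : Ultrafilter L, ∃ l : L, ↑H ≤ 𝓝 l := by
    intro H
    rcases isCompact_iff_ultrafilter_le_nhds.mp isCompact_univ H
      (le_principal_iff.mpr univ_mem) with ⟨l, -, h⟩
    exact ⟨l, h⟩
  letI tKL : TopologicalSpace (K × L) := ternaryTopology (lexSbtw K L)
  constructor
  rw [isCompact_iff_ultrafilter_le_nhds]
  intro F _
  obtain ⟨k, hGk⟩ := hKc (F.map Prod.fst)
  have hpull : ∀ s : Set K, s ∈ @nhds K (circularTopology K) k →
      {p : K × L | p.1 ∈ s} ∈ F := by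
    intro s hs
    exact (Ultrafilter.mem_map).mp (hGk hs)
  by_cases hfib : {p : K × L | p.1 = k} ∈ F
  · -- Case A : the fiber over k carries the ultrafilter
    obtain ⟨l, hHl⟩ := hLc (F.map Prod.snd)
    refine ⟨(k, l), mem_univ _, le_nhds_ternaryTopology ?_⟩
    rintro ⟨a, x⟩ ⟨b, y⟩ hkl
    rw [mem_compl_ternIcc] at hkl
    obtain ⟨hnl, hne1, hne2⟩ := hkl
    have key : ∃ O : Set L, IsOpen O ∧ l ∈ O ∧
        ∀ t ∈ O, ((k, t) : K × L) ∈ (ternIcc (lexSbtw K L) (a, x) (b, y))ᶜ := by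
      by_cases hak : a = k
      · by_cases hbk : b = k
        · -- a = k, b = k
          rw [hak] at hnl hne1 ⊢
          rw [hbk] at hnl hne2 ⊢
          have hlx : l ≠ x := fun e => hne1 (by rw [e])
          have hly : l ≠ y := fun e => hne2 (by rw [e])
          by_cases hxy : x = y
          · refine ⟨{t | t ≠ x}, isOpen_ne, hlx, ?_⟩
            intro t ht
            rw [mem_compl_ternIcc]
            refine ⟨fun h => ?_, fun e => ht (congrArg Prod.snd e),
              fun e => (hxy ▸ ht : t ≠ y) (congrArg Prod.snd e)⟩
            exact h.2.2.1 (by rw [hxy])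
          · rcases lt_or_gt_of_ne hxy with hlt | hlt
            · refine ⟨Iio x ∪ Ioi y, isOpen_Iio.union isOpen_Ioi, ?_, ?_⟩
              · by_contra hc
                simp only [mem_union, mem_Iio, mem_Ioi, not_or, not_lt] at hc
                exact hnl (lexSbtw_fiber.mpr (Or.inl
                  ⟨lt_of_le_of_ne hc.1 (Ne.symm hlx), lt_of_le_of_ne hc.2 hly⟩))
              · rintro t (ht | ht) <;> rw [mem_compl_ternIcc]
                · refine ⟨fun h => ?_, fun e => (ne_of_lt ht) (congrArg Prod.snd e),
                    fun e => (ne_of_lt (ht.trans hlt)) (congrArg Prod.snd e)⟩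
                  rcases lexSbtw_fiber.mp h with ⟨h1, h2⟩ | ⟨h1, h2⟩ | ⟨h1, h2⟩
                  · exact absurd h1 (lt_asymm ht)
                  · exact absurd h2 (lt_asymm hlt)
                  · exact absurd h1 (lt_asymm hlt)
                · refine ⟨fun h => ?_, fun e => (ne_of_gt (hlt.trans ht)) (congrArg Prod.snd e),
                    fun e => (ne_of_gt ht) (congrArg Prod.snd e)⟩
                  rcases lexSbtw_fiber.mp h with ⟨h1, h2⟩ | ⟨h1, h2⟩ | ⟨h1, h2⟩
                  · exact absurd h2 (lt_asymm ht)
                  · exact absurd h2 (lt_asymm hlt)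
                  · exact absurd h1 (lt_asymm hlt)
            · refine ⟨Ioo y x, isOpen_Ioo, ?_, ?_⟩
              · refine ⟨?_, ?_⟩
                · by_contra hc
                  push_neg at hc
                  exact hnl (lexSbtw_fiber.mpr (Or.inr (Or.inl
                    ⟨lt_of_le_of_ne hc hly, hlt⟩)))
                · by_contra hc
                  push_neg at hc
                  exact hnl (lexSbtw_fiber.mpr (Or.inr (Or.inr
                    ⟨hlt, lt_of_le_of_ne hc (Ne.symm hlx)⟩)))
              · rintro t ⟨ht1, ht2⟩
                rw [mem_compl_ternIcc]
                refine ⟨fun h => ?_, fun e => (ne_of_lt ht2) (congrArg Prod.snd e),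
                  fun e => (ne_of_gt ht1) (congrArg Prod.snd e)⟩
                rcases lexSbtw_fiber.mp h with ⟨h1, h2⟩ | ⟨h1, h2⟩ | ⟨h1, h2⟩
                · exact absurd ht2 (lt_asymm h1)
                · exact absurd ht1 (lt_asymm h1)
                · exact absurd ht2 (lt_asymm h2)
        · -- a = k, b ≠ k
          rw [hak] at hnl hne1 ⊢
          have hkb : k ≠ b := fun e => hbk e.symm
          have hlx : l ≠ x := fun e => hne1 (by rw [e])
          have hxl : ¬ x < l := fun h => hnl ((lexSbtw_left_fiber hkb).mpr h)
          refine ⟨Iio x, isOpen_Iio, lt_of_le_of_ne (not_lt.mp hxl) hlx, ?_⟩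
          intro t ht
          rw [mem_compl_ternIcc]
          exact ⟨fun h => (lt_asymm ht) ((lexSbtw_left_fiber hkb).mp h),
            fun e => (ne_of_lt ht) (congrArg Prod.snd e),
            fun e => hkb (congrArg Prod.fst e)⟩
      · by_cases hbk : b = k
        · -- a ≠ k, b = k
          rw [hbk] at hnl hne2 ⊢
          have hly : l ≠ y := fun e => hne2 (by rw [e])
          have hyl : ¬ l < y := fun h => hnl ((lexSbtw_right_fiber hak).mpr h)
          refine ⟨Ioi y, isOpen_Ioi, lt_of_le_of_ne (not_lt.mp hyl) (Ne.symm hly), ?_⟩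
          intro t ht
          rw [mem_compl_ternIcc]
          exact ⟨fun h => (lt_asymm ht) ((lexSbtw_right_fiber hak).mp h),
            fun e => hak ((congrArg Prod.fst e).symm),
            fun e => (ne_of_gt ht) (congrArg Prod.snd e)⟩
        · -- a ≠ k, b ≠ k
          have hD : ¬ (sbtw a k b ∨ (b = a ∧ y < x)) := fun d =>
            hnl ((lexSbtw_mid_off (p := ((k, l) : K × L)) (Ne.symm hak) (Ne.symm hbk)).mpr d)
          refine ⟨univ, isOpen_univ, mem_univ l, ?_⟩
          intro t _
          rw [mem_compl_ternIcc]
          exact ⟨fun h => hD ((lexSbtw_mid_off (p := ((k, t) : K × L))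
              (Ne.symm hak) (Ne.symm hbk)).mp h),
            fun e => hak ((congrArg Prod.fst e).symm),
            fun e => hbk ((congrArg Prod.fst e).symm)⟩
    obtain ⟨O, hO, hlO, hsub⟩ := key
    have hOF : Prod.snd ⁻¹' O ∈ F := (Ultrafilter.mem_map).mp (hHl (hO.mem_nhds hlO))
    refine mem_of_superset (inter_mem hfib hOF) ?_
    rintro ⟨c, t⟩ ⟨hc, ht⟩
    have hc' : c = k := hc
    subst hc'
    exact hsub t ht
  · -- Case B : the ultrafilter lives off the fiber over k
    have hFk : {p : K × L | p.1 ≠ k} ∈ F := by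
      have h1 := (Ultrafilter.compl_mem_iff_notMem).mpr hfib
      have h2 : {p : K × L | p.1 = k}ᶜ = {p : K × L | p.1 ≠ k} := rfl
      rwa [h2] at h1
    have hGne : {c : K | c ≠ k} ∈ F.map Prod.fst := (Ultrafilter.mem_map).mpr hFk
    have hpullG : ∀ s : Set K, s ∈ F.map Prod.fst → {p : K × L | p.1 ∈ s} ∈ F :=
      fun s hs => (Ultrafilter.mem_map).mp hs
    obtain ⟨p₀, -⟩ := F.nonempty_of_mem (univ_mem : (univ : Set (K × L)) ∈ F)
    haveI : Nonempty L := ⟨p₀.2⟩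
    have hfar : ∀ (a b : K) (x y : L), a ≠ k → b ≠ k →
        ¬ (sbtw a k b ∨ (b = a ∧ y < x)) →
        (ternIcc (lexSbtw K L) (a, x) (b, y))ᶜ ∈ F := by
      intro a b x y hak hbk hD
      by_cases hab : a = b
      · refine mem_of_superset (hpull _ (compl_singleton_mem_nhds_circ (Ne.symm hak))) ?_
        intro p hp
        have hpa : p.1 ≠ a := hp
        have hpb : p.1 ≠ b := hab ▸ hpa
        rw [mem_compl_ternIcc]
        refine ⟨fun h => ?_, fun e => hpa (congrArg Prod.fst e),
          fun e => hpb (congrArg Prod.fst e)⟩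
        rcases (lexSbtw_mid_off hpa hpb).mp h with h | h
        · rw [← hab] at h
          exact sbtw_irrefl_left_right h
        · exact hD (Or.inr h)
      · have hs : sbtw b k a :=
          sbtw_of_not_sbtw (fun h => hD (Or.inl h)) (Ne.symm hak) (Ne.symm hbk) hab
        refine mem_of_superset (hpull _ (arc_mem_nhds hs)) ?_
        intro p hp
        have hp' : sbtw b p.1 a := hp
        have hpa : p.1 ≠ a := sbtw_ne₂ hp'
        have hpb : p.1 ≠ b := Ne.symm (sbtw_ne₁ hp')
        rw [mem_compl_ternIcc]
        refine ⟨fun h => ?_, fun e => hpa (congrArg Prod.fst e),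
          fun e => hpb (congrArg Prod.fst e)⟩
        rcases (lexSbtw_mid_off hpa hpb).mp h with h | h
        · exact sbtw_asymm hp' h
        · exact hab h.1.symm
    rcases sides_dichotomy (F.map Prod.fst) k hGk hGne with hside | hside
    · -- all mass before k : converge to (k, min L)
      obtain ⟨l, hl⟩ := (isCompact_univ : IsCompact (univ : Set L)).exists_isLeast univ_nonempty
      have hbot : ∀ t : L, l ≤ t := fun t => hl.2 (mem_univ t)
      refine ⟨(k, l), mem_univ _, le_nhds_ternaryTopology ?_⟩
      rintro ⟨a, x⟩ ⟨b, y⟩ hkl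
      rw [mem_compl_ternIcc] at hkl
      obtain ⟨hnl, hne1, hne2⟩ := hkl
      by_cases hak : a = k
      · by_cases hbk : b = k
        · rw [hak] at hnl hne1 ⊢
          rw [hbk] at hnl hne2 ⊢
          by_cases hxy : x = y
          · rw [hxy, ternIcc_lexSbtw_self]
            refine mem_of_superset hFk ?_
            intro p hp
            simp only [mem_compl_iff, mem_singleton_iff]
            exact fun e => (hp : p.1 ≠ k) (by rw [e])
          · have hxy' : x < y := by
              rcases lt_or_gt_of_ne hxy with h | h
              · exact h
              · exfalso
                have hly : l ≠ y := fun e => hne2 (by rw [e])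
                exact hnl (lexSbtw_fiber.mpr (Or.inr (Or.inl
                  ⟨lt_of_le_of_ne (hbot y) hly, h⟩)))
            refine mem_of_superset hFk ?_
            intro p hp
            have hp' : p.1 ≠ k := hp
            rw [mem_compl_ternIcc]
            refine ⟨fun h => ?_, fun e => hp' (by rw [e]), fun e => hp' (by rw [e])⟩
            rcases (lexSbtw_mid_off hp' hp').mp h with h | h
            · exact sbtw_irrefl_left_right h
            · exact absurd h.2 (lt_asymm hxy')
        · -- a = k, b ≠ k
          rw [hak] at hnl hne1 ⊢
          have hkb : k ≠ b := fun e => hbk e.symm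
          have hT3 : {p : K × L | p.1 ∈ {c : K | sbtw b c k}} ∈ F := hpullG _ (hside b hbk)
          have hT2 : {p : K × L | p.1 ∈ {c : K | c ≠ b}} ∈ F :=
            hpull _ (compl_singleton_mem_nhds_circ hkb)
          refine mem_of_superset (inter_mem hT2 hT3) ?_
          rintro p ⟨hp2, hp3⟩
          have hpb : p.1 ≠ b := hp2
          have hp3' : sbtw b p.1 k := hp3
          have hpk : p.1 ≠ k := sbtw_ne₂ hp3'
          rw [mem_compl_ternIcc]
          refine ⟨fun h => ?_, fun e => hpk (congrArg Prod.fst e),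
            fun e => hpb (congrArg Prod.fst e)⟩
          rcases (lexSbtw_mid_off hpk hpb).mp h with h | h
          · exact sbtw_asymm hp3' h
          · exact hbk h.1
      · by_cases hbk : b = k
        · exfalso
          rw [hbk] at hnl hne2
          have hly : l ≠ y := fun e => hne2 (by rw [e])
          exact hnl ((lexSbtw_right_fiber hak).mpr (lt_of_le_of_ne (hbot y) hly))
        · exact hfar a b x y hak hbk (fun d =>
            hnl ((lexSbtw_mid_off (p := ((k, l) : K × L)) (Ne.symm hak) (Ne.symm hbk)).mpr d))
    · -- all mass after k : converge to (k, max L)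
      obtain ⟨l, hl⟩ := (isCompact_univ : IsCompact (univ : Set L)).exists_isGreatest univ_nonempty
      have htop : ∀ t : L, t ≤ l := fun t => hl.2 (mem_univ t)
      refine ⟨(k, l), mem_univ _, le_nhds_ternaryTopology ?_⟩
      rintro ⟨a, x⟩ ⟨b, y⟩ hkl
      rw [mem_compl_ternIcc] at hkl
      obtain ⟨hnl, hne1, hne2⟩ := hkl
      by_cases hak : a = k
      · by_cases hbk : b = k
        · rw [hak] at hnl hne1 ⊢
          rw [hbk] at hnl hne2 ⊢
          by_cases hxy : x = y
          · rw [hxy, ternIcc_lexSbtw_self]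
            refine mem_of_superset hFk ?_
            intro p hp
            simp only [mem_compl_iff, mem_singleton_iff]
            exact fun e => (hp : p.1 ≠ k) (by rw [e])
          · have hxy' : x < y := by
              rcases lt_or_gt_of_ne hxy with h | h
              · exact h
              · exfalso
                have hxl : x ≠ l := fun e => hne1 (by rw [e])
                exact hnl (lexSbtw_fiber.mpr (Or.inr (Or.inr
                  ⟨h, lt_of_le_of_ne (htop x) hxl⟩)))
            refine mem_of_superset hFk ?_
            intro p hp
            have hp' : p.1 ≠ k := hp
            rw [mem_compl_ternIcc]
            refine ⟨fun h => ?_, fun e => hp' (by rw [e]), fun e => hp' (by rw [e])⟩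
            rcases (lexSbtw_mid_off hp' hp').mp h with h | h
            · exact sbtw_irrefl_left_right h
            · exact absurd h.2 (lt_asymm hxy')
        · -- a = k, b ≠ k : impossible
          exfalso
          rw [hak] at hnl hne1
          have hkb : k ≠ b := fun e => hbk e.symm
          have hxl : x ≠ l := fun e => hne1 (by rw [e])
          exact hnl ((lexSbtw_left_fiber hkb).mpr (lt_of_le_of_ne (htop x) hxl))
      · by_cases hbk : b = k
        · -- a ≠ k, b = k
          rw [hbk] at hnl hne2 ⊢
          have hT3 : {p : K × L | p.1 ∈ {c : K | sbtw k c a}} ∈ F := hpullG _ (hside a hak)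
          have hT2 : {p : K × L | p.1 ∈ {c : K | c ≠ a}} ∈ F :=
            hpull _ (compl_singleton_mem_nhds_circ (Ne.symm hak))
          refine mem_of_superset (inter_mem hT2 hT3) ?_
          rintro p ⟨hp2, hp3⟩
          have hpa : p.1 ≠ a := hp2
          have hp3' : sbtw k p.1 a := hp3
          have hpk : p.1 ≠ k := Ne.symm (sbtw_ne₁ hp3')
          rw [mem_compl_ternIcc]
          refine ⟨fun h => ?_, fun e => hpa (congrArg Prod.fst e),
            fun e => hpk (congrArg Prod.fst e)⟩
          rcases (lexSbtw_mid_off hpa hpk).mp h with h | h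
          · exact sbtw_asymm hp3' h
          · exact hak h.1.symm
        · exact hfar a b x y hak hbk (fun d =>
            hnl ((lexSbtw_mid_off (p := ((k, l) : K × L)) (Ne.symm hak) (Ne.symm hbk)).mpr d))
end

section
/- Let X be a circularly ordered set and G a group acting on X effectively by sbtw-preserving bijections. Then there exist: a compact Hausdorff totally disconnected space X∞ equipped with a circular order whose circular topology coincides with its topology; an action of G on X∞ by sbtw-preserving homeomorphisms which is jointly continuous when G carries the topology of pointwise convergence on the discrete set X; and a G-equivariant injective map ν : X → X∞ which is circular-order preserving, has dense image, and whose image is a discrete subspace of X∞ (so ν is a topological embedding of the discrete space X). Moreover, if X is countable then X∞ is metrizable. -/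
universe u v

/-- The strict betweenness relation of a given circular order structure. -/
def csbtw {Y : Type*} (c : CircularOrder Y) : Y → Y → Y → Prop :=
  letI := c
  fun x y z => sbtw x y z

/-- A map `f` between sets carrying circular-order-like ternary relations is circular-order
preserving (COP) if it maps strict betweenness to strict betweenness whenever the images are
pairwise distinct, and whenever `f a = f c` it is constant on one of the closed intervals
`[a,c]∘`, `[c,a]∘`. -/
def IsCOP {X Y : Type*} (RX : X → X → X → Prop) (RY : Y → Y → Y → Prop) (f : X → Y) : Prop :=
  (∀ a b c : X, RX a b c → f a ≠ f b → f b ≠ f c → f c ≠ f a → RY (f a) (f b) (f c)) ∧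
    (∀ a c : X, f a = f c →
      (∀ x ∈ ternIcc RX a c, f x = f a) ∨ (∀ x ∈ ternIcc RX c a, f x = f a))

namespace CILC

variable {X : Type u} [CircularOrder X]

theorem sbtw_ne12 {a b c : X} (h : sbtw a b c) : a ≠ b := by
  rintro rfl; exact sbtw_irrefl_left h

theorem sbtw_ne23 {a b c : X} (h : sbtw a b c) : b ≠ c := by
  rintro rfl; exact sbtw_irrefl_right h

theorem sbtw_ne13 {a b c : X} (h : sbtw a b c) : a ≠ c := by
  rintro rfl; exact sbtw_irrefl_left_right h

theorem sbtw_of_btw_ne {a b c : X} (h : btw a b c) (h1 : a ≠ b) (h2 : b ≠ c) (h3 : a ≠ c) :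
    sbtw a b c := by
  refine sbtw_of_btw_not_btw h (fun hr => ?_)
  rcases h.antisymm hr with h' | h' | h' <;> [exact h1 h'; exact h2 h'; exact h3 h'.symm]

theorem sbtw_trichotomy {a b c : X} (h1 : a ≠ b) (h2 : b ≠ c) (h3 : a ≠ c) :
    sbtw a b c ∨ sbtw c b a := by
  rcases btw_total a b c with h | h
  · exact Or.inl (sbtw_of_btw_ne h h1 h2 h3)
  · exact Or.inr (sbtw_of_btw_ne h (Ne.symm h2) (Ne.symm h1) (Ne.symm h3))

/-- The closed interval of the circular order, in `ternIcc` form. -/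
def K (a b : X) : Set X := ternIcc (fun x y z => sbtw x y z) a b

theorem mem_K_iff {a b x : X} : x ∈ K a b ↔ sbtw a x b ∨ x = a ∨ x = b := by
  simp only [K, ternIcc, Set.mem_union, Set.mem_setOf_eq, Set.mem_insert_iff,
    Set.mem_singleton_iff]

theorem left_mem_K (a b : X) : a ∈ K a b := mem_K_iff.2 (Or.inr (Or.inl rfl))
theorem right_mem_K (a b : X) : b ∈ K a b := mem_K_iff.2 (Or.inr (Or.inr rfl))

theorem K_self (a : X) : K a a = {a} := by
  ext x
  simp only [mem_K_iff, Set.mem_singleton_iff, or_self]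
  exact ⟨fun h => h.elim (fun h' => absurd h' sbtw_irrefl_left_right) id, fun h => Or.inr h⟩

theorem mem_K_of_sbtw {a b x : X} (h : sbtw a x b) : x ∈ K a b := mem_K_iff.2 (Or.inl h)

theorem btw_of_mem_K {a b x : X} (h : x ∈ K a b) : btw a x b := by
  rcases mem_K_iff.1 h with h | rfl | rfl
  · exact h.btw
  · exact btw_rfl_left
  · exact btw_rfl_right

theorem mem_K_iff_btw {a b x : X} (hab : a ≠ b) : x ∈ K a b ↔ btw a x b := by
  refine ⟨btw_of_mem_K, fun h => ?_⟩
  by_cases hxa : x = a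
  · exact hxa ▸ left_mem_K a b
  by_cases hxb : x = b
  · exact hxb ▸ right_mem_K a b
  · exact mem_K_of_sbtw (sbtw_of_btw_ne h (Ne.symm hxa) hxb hab)

theorem not_mem_K_iff {a b x : X} (hab : a ≠ b) : x ∉ K a b ↔ sbtw b x a := by
  rw [mem_K_iff_btw hab, sbtw_iff_not_btw]

theorem mem_K_or_mem_K {a b : X} (hab : a ≠ b) (x : X) : x ∈ K a b ∨ x ∈ K b a := by
  rcases btw_total a x b with h | h
  · exact Or.inl ((mem_K_iff_btw hab).2 h)
  · exact Or.inr ((mem_K_iff_btw (Ne.symm hab)).2 h)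

theorem mem_K_inter {a b x : X} (h1 : x ∈ K a b) (h2 : x ∈ K b a) : x = a ∨ x = b := by
  by_cases hab : a = b
  · subst hab; rw [K_self] at h1; exact Or.inl h1
  rcases (btw_of_mem_K h1).antisymm (btw_of_mem_K h2) with h | h | h
  · exact Or.inl h.symm
  · exact Or.inr h
  · exact absurd h.symm hab

/-- Four points in a row: `a, r, s, t` cyclically implies `sbtw r s t`. -/
theorem sbtw_chain4 {a r s t : X} (h1 : sbtw a r s) (h2 : sbtw s t a) : sbtw r s t := by
  have h3 : sbtw t r s := (h2.cyclic_left).trans_left h1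
  rw [sbtw_iff_not_btw]
  intro hb
  exact h3.not_btw hb.cyclic_left

end CILC

namespace CILC

variable {X : Type u} [CircularOrder X]

/-- Two points have the same pattern of membership in closed intervals with endpoints in `E`. -/
def PatEq (E : Finset X) (p q : X) : Prop :=
  ∀ a ∈ E, ∀ b ∈ E, (p ∈ K a b ↔ q ∈ K a b)

/-- Two points are separated by some interval with endpoints in `E`. -/
def PatNe (E : Finset X) (p q : X) : Prop :=
  ∃ a ∈ E, ∃ b ∈ E, ¬(p ∈ K a b ↔ q ∈ K a b)

theorem PatEq.symm {E : Finset X} {p q : X} (h : PatEq E p q) : PatEq E q p :=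
  fun a ha b hb => (h a ha b hb).symm

theorem PatNe.symm {E : Finset X} {p q : X} (h : PatNe E p q) : PatNe E q p := by
  obtain ⟨a, ha, b, hb, hn⟩ := h
  exact ⟨a, ha, b, hb, fun h' => hn h'.symm⟩

theorem PatNe.congr_left {E : Finset X} {p p' q : X} (h : PatNe E p q) (he : PatEq E p p') :
    PatNe E p' q := by
  obtain ⟨a, ha, b, hb, hn⟩ := h
  exact ⟨a, ha, b, hb, fun h' => hn ((he a ha b hb).trans h')⟩

theorem not_patNe_of_patEq {E : Finset X} {p q : X} (h : PatEq E p q) : ¬PatNe E p q := by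
  rintro ⟨a, ha, b, hb, hn⟩
  exact hn (h a ha b hb)

theorem PatEq.ne_of_mem {E : Finset X} {p q : X} (h : PatEq E p q) (hpq : p ≠ q) {e : X}
    (he : e ∈ E) : p ≠ e := by
  rintro rfl
  have := (h p he p he).1 (left_mem_K p p)
  rw [K_self] at this
  exact hpq this.symm

/-- Gap lemma: two `E`-equivalent distinct points have no `E`-point strictly
on one of their two sides. -/
theorem gap {E : Finset X} {p q : X} (h : PatEq E p q) (hpq : p ≠ q) :
    (∀ e ∈ E, ¬sbtw p e q) ∨ (∀ e ∈ E, ¬sbtw q e p) := by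
  by_contra hc
  push_neg at hc
  obtain ⟨⟨a, ha, hpa⟩, ⟨b, hb, hqb⟩⟩ := hc
  have hab : a ≠ b := by
    rintro rfl
    exact (sbtw_asymm hpa) hqb
  have h1 : sbtw a q b := sbtw_chain4 hpa hqb
  have h2 : sbtw b p a := sbtw_chain4 hqb hpa
  have hqK : q ∈ K a b := mem_K_of_sbtw h1
  have hpK : p ∉ K a b := (not_mem_K_iff hab).2 h2
  exact hpK ((h a ha b hb).2 hqK)

/-- Core of the exchange lemma: if `x, x'` are `E`-equivalent, lie in `K a b`, and
`y ∉ K a b` lies strictly between them, then some point of `E` lies strictly between them. -/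
theorem S1core {E : Finset X} {x x' y a b : X} (ha : a ∈ E) (hb : b ∈ E)
    (hxx' : PatEq E x x') (hne : x ≠ x') (hsb : sbtw x y x')
    (hx : x ∈ K a b) (hx' : x' ∈ K a b) (hy : y ∉ K a b) :
    ∃ e ∈ E, sbtw x e x' := by
  have hxa : x ≠ a := hxx'.ne_of_mem hne ha
  have hxb : x ≠ b := hxx'.ne_of_mem hne hb
  have hx'a : x' ≠ a := hxx'.symm.ne_of_mem hne.symm ha
  have hx'b : x' ≠ b := hxx'.symm.ne_of_mem hne.symm hb
  have hab : a ≠ b := by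
    rintro rfl
    rw [K_self] at hx
    exact hxa hx
  have hya : sbtw b y a := (not_mem_K_iff hab).1 hy
  have haxb : sbtw a x b := sbtw_of_btw_ne (btw_of_mem_K hx) (Ne.symm hxa) hxb hab
  have hax'b : sbtw a x' b := sbtw_of_btw_ne (btw_of_mem_K hx') (Ne.symm hx'a) hx'b hab
  by_contra hc
  push_neg at hc
  have hbx : sbtw x' b x := by
    rcases sbtw_trichotomy (Ne.symm hxb.symm) hx'b.symm hne with h | h
    · exact absurd h (hc b hb)
    · exact h
  have hax : sbtw x' a x := by
    rcases sbtw_trichotomy hxa hx'a.symm hne with h | h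
    · exact absurd h (hc a ha)
    · exact h
  rcases sbtw_trichotomy (Ne.symm hxa) hne (Ne.symm hx'a) with hA | hB
  · -- sbtw a x x'
    have h1 : sbtw a y x' := hA.trans_left hsb
    have h2 : sbtw a y b := h1.trans_right hax'b
    exact hy (mem_K_of_sbtw h2)
  · -- sbtw x' x a
    have hA' : sbtw a x' x := hB.cyclic_left.cyclic_left
    have h1 : sbtw a b x := hA'.trans_left hbx
    exact (sbtw_asymm h1) haxb.cyclic_left

/-- Exchange-preparation: if `y` is separated from `x ≈ x'` by an `E`-interval and lies strictly
between `x` and `x'`, then a point of `E` lies strictly between `x` and `x'`. -/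
theorem S1 {E : Finset X} {x x' y a b : X} (ha : a ∈ E) (hb : b ∈ E)
    (hxx' : PatEq E x x') (hne : x ≠ x') (hsb : sbtw x y x')
    (hsep : ¬(y ∈ K a b ↔ x ∈ K a b)) :
    ∃ e ∈ E, sbtw x e x' := by
  by_cases hyK : y ∈ K a b
  · have hxK : x ∉ K a b := fun h => hsep ⟨fun _ => h, fun _ => hyK⟩
    -- y ∈ K a b, x ∉ K a b
    by_cases hya : y = a
    · exact ⟨a, ha, hya ▸ hsb⟩
    by_cases hyb : y = b
    · exact ⟨b, hb, hyb ▸ hsb⟩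
    have hab : a ≠ b := by
      rintro rfl
      rw [K_self] at hyK
      exact hya hyK
    have hx'K : x' ∉ K a b := fun h => hxK ((hxx' a ha b hb).2 h)
    have hxK' : x ∈ K b a := (mem_K_or_mem_K hab x).resolve_left hxK
    have hx'K' : x' ∈ K b a := (mem_K_or_mem_K hab x').resolve_left hx'K
    have hyK' : y ∉ K b a := by
      intro h
      rcases mem_K_inter hyK h with h' | h'
      · exact hya h'
      · exact hyb h'
    exact S1core hb ha hxx' hne hsb hxK' hx'K' hyK'
  · have hxK : x ∈ K a b := by
      by_contra hxK
      exact hsep ⟨fun h => absurd h hyK, fun h => absurd h hxK⟩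
    exact S1core ha hb hxx' hne hsb hxK ((hxx' a ha b hb).1 hxK) hyK

/-- Exchange lemma: replacing `x` by an `E`-equivalent point preserves strict betweenness,
provided `y, z` are `E`-separated from `x`. -/
theorem exchange {E : Finset X} {x x' y z : X} (hxx' : PatEq E x x')
    (hyx : PatNe E y x) (hzx : PatNe E z x) (h : sbtw x y z) : sbtw x' y z := by
  by_cases hne : x = x'
  · exact hne ▸ h
  have hx'y : x' ≠ y := by
    rintro rfl
    exact not_patNe_of_patEq hxx'.symm hyx
  have hx'z : x' ≠ z := by
    rintro rfl
    exact not_patNe_of_patEq hxx'.symm hzx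
  by_contra hc
  have hrev : sbtw z y x' := by
    rcases sbtw_trichotomy hx'y (sbtw_ne23 h) hx'z with h' | h'
    · exact absurd h' hc
    · exact h'
  have hyx'z : sbtw y x' z := hrev.cyclic_left
  have h1 : sbtw x x' z := h.trans_left hyx'z
  have h2 : sbtw x y x' := ((hyx'z.cyclic_left).trans_left (h.cyclic_left.cyclic_left)).cyclic_left
  have h3 : sbtw x' z x := h1.cyclic_left
  rcases gap hxx' hne with G1 | G2
  · obtain ⟨a, ha, b, hb, hsep⟩ := hyx
    obtain ⟨e, he, hse⟩ := S1 ha hb hxx' hne h2 hsep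
    exact (G1 e he) hse
  · obtain ⟨a, ha, b, hb, hsep⟩ := hzx
    have hsep' : ¬(z ∈ K a b ↔ x' ∈ K a b) := fun h' => hsep (h'.trans (hxx' a ha b hb).symm)
    obtain ⟨e, he, hse⟩ := S1 ha hb hxx'.symm (Ne.symm hne) h3 hsep'
    exact (G2 e he) hse

/-- Main transfer lemma: strict betweenness only depends on `E`-patterns, for points in
pairwise distinct `E`-patterns. -/
theorem mainTransfer {E : Finset X} {x x' y y' z z' : X}
    (hx : PatEq E x x') (hy : PatEq E y y') (hz : PatEq E z z')
    (nxy : PatNe E x y) (nyz : PatNe E y z) (nzx : PatNe E z x)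
    (h : sbtw x y z) : sbtw x' y' z' := by
  have s1 : sbtw x' y z := exchange hx nxy.symm nzx h
  have s2 : sbtw y' z x' :=
    exchange hy nyz.symm (nxy.congr_left hx) s1.cyclic_left
  have s3 : sbtw z' x' y' :=
    exchange hz ((nzx.symm).congr_left hx) (nyz.congr_left hy) s2.cyclic_left
  exact s3.cyclic_left

end CILC

namespace CILC

open Set Topology

variable {X : Type u} [CircularOrder X]

/-- Coordinate space: characteristic functions of membership in closed intervals. -/
abbrev P (X : Type u) := (X × X) → Bool

open scoped Classical in
/-- The canonical embedding of `X` into `P X`. -/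
noncomputable def nuF (x : X) : P X := fun p => decide (x ∈ K p.1 p.2)

theorem nuF_eq_true_iff {x : X} {p : X × X} : nuF x p = true ↔ x ∈ K p.1 p.2 := by
  simp [nuF]

theorem nuF_eq_false_iff {x : X} {p : X × X} : nuF x p = false ↔ x ∉ K p.1 p.2 := by
  simp [nuF]

theorem isOpen_cyl (f : P X) (F : Finset (X × X)) :
    IsOpen {g : P X | ∀ p ∈ F, g p = f p} := by
  have : {g : P X | ∀ p ∈ F, g p = f p} = ⋂ p ∈ F, (fun g : P X => g p) ⁻¹' {f p} := by
    ext g; simp [Set.mem_iInter]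
  rw [this]
  exact isOpen_biInter_finset fun p _ =>
    (continuous_apply p).isOpen_preimage _ (isOpen_discrete _)

theorem cyl_mem_nhds (f : P X) (F : Finset (X × X)) :
    {g : P X | ∀ p ∈ F, g p = f p} ∈ 𝓝 f :=
  (isOpen_cyl f F).mem_nhds (fun _ _ => rfl)

theorem exists_cyl_subset {f : P X} {U : Set (P X)} (hU : U ∈ 𝓝 f) :
    ∃ F : Finset (X × X), {g : P X | ∀ p ∈ F, g p = f p} ⊆ U := by
  obtain ⟨V, hVU, hV, hfV⟩ := mem_nhds_iff.1 hU
  obtain ⟨I, t, hIt, hsub⟩ := isOpen_pi_iff.1 hV f hfV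
  refine ⟨I, fun g hg => hVU (hsub fun p hp => ?_)⟩
  rw [hg p hp]
  exact (hIt p hp).2

theorem mem_closure_pi {A : Set (P X)} {f : P X} :
    f ∈ closure A ↔ ∀ F : Finset (X × X), ∃ g ∈ A, ∀ p ∈ F, g p = f p := by
  rw [mem_closure_iff_nhds]
  constructor
  · intro h F
    obtain ⟨g, hg1, hg2⟩ := h _ (cyl_mem_nhds f F)
    exact ⟨g, hg2, hg1⟩
  · intro h U hU
    obtain ⟨F, hF⟩ := exists_cyl_subset hU
    obtain ⟨g, hgA, hg⟩ := h F
    exact ⟨g, hF hg, hgA⟩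

theorem mem_closure_triple {A : Set (P X × P X × P X)} {u v w : P X} :
    (u, v, w) ∈ closure A ↔ ∀ F : Finset (X × X), ∃ t ∈ A,
      (∀ p ∈ F, t.1 p = u p) ∧ (∀ p ∈ F, t.2.1 p = v p) ∧ (∀ p ∈ F, t.2.2 p = w p) := by
  rw [mem_closure_iff_nhds]
  constructor
  · intro h F
    have hU : {g : P X | ∀ p ∈ F, g p = u p} ×ˢ
        ({g : P X | ∀ p ∈ F, g p = v p} ×ˢ {g : P X | ∀ p ∈ F, g p = w p}) ∈ 𝓝 (u, v, w) :=
      prod_mem_nhds (cyl_mem_nhds u F) (prod_mem_nhds (cyl_mem_nhds v F) (cyl_mem_nhds w F))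
    obtain ⟨t, ht1, ht2⟩ := h _ hU
    exact ⟨t, ht2, ht1.1, ht1.2.1, ht1.2.2⟩
  · intro h U hU
    classical
    rw [mem_nhds_prod_iff] at hU
    obtain ⟨U1, hU1, V, hV, hUV⟩ := hU
    rw [mem_nhds_prod_iff] at hV
    obtain ⟨U2, hU2, U3, hU3, hV'⟩ := hV
    obtain ⟨F1, hF1⟩ := exists_cyl_subset hU1
    obtain ⟨F2, hF2⟩ := exists_cyl_subset hU2
    obtain ⟨F3, hF3⟩ := exists_cyl_subset hU3
    obtain ⟨t, htA, h1, h2, h3⟩ := h (F1 ∪ F2 ∪ F3)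
    refine ⟨t, hUV ⟨hF1 fun p hp => h1 p (by simp [Finset.mem_union, hp]),
      hV' ⟨hF2 fun p hp => h2 p (by simp [Finset.mem_union, hp]),
           hF3 fun p hp => h3 p (by simp [Finset.mem_union, hp])⟩⟩, htA⟩

/-- The compactification as a subset of `P X`. -/
def YS (X : Type u) [CircularOrder X] : Set (P X) := closure (Set.range (nuF : X → P X))

theorem nuF_mem_YS (x : X) : nuF x ∈ YS X := subset_closure ⟨x, rfl⟩

theorem realize {w : P X} (hw : w ∈ YS X) (F : Finset (X × X)) :
    ∃ x : X, ∀ p ∈ F, nuF x p = w p := by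
  obtain ⟨g, ⟨x, rfl⟩, hg⟩ := mem_closure_pi.1 hw F
  exact ⟨x, hg⟩

/-- Betweenness triples coming from `X`. -/
def btwT (X : Type u) [CircularOrder X] : Set (P X × P X × P X) :=
  {t | ∃ x y z : X, btw x y z ∧ t = (nuF x, nuF y, nuF z)}

/-- The limit betweenness relation. -/
def btwP (u v w : P X) : Prop := (u, v, w) ∈ closure (btwT X)

theorem btwP_iff_realize {u v w : P X} :
    btwP u v w ↔ ∀ F : Finset (X × X), ∃ x y z : X, btw x y z ∧
      (∀ p ∈ F, nuF x p = u p) ∧ (∀ p ∈ F, nuF y p = v p) ∧ (∀ p ∈ F, nuF z p = w p) := by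
  rw [btwP, mem_closure_triple]
  constructor
  · intro h F
    obtain ⟨t, ⟨x, y, z, hxyz, rfl⟩, h1, h2, h3⟩ := h F
    exact ⟨x, y, z, hxyz, h1, h2, h3⟩
  · intro h F
    obtain ⟨x, y, z, hxyz, h1, h2, h3⟩ := h F
    exact ⟨(nuF x, nuF y, nuF z), ⟨x, y, z, hxyz, rfl⟩, h1, h2, h3⟩

theorem btwP_of_btw {x y z : X} (h : btw x y z) : btwP (nuF x) (nuF y) (nuF z) :=
  subset_closure ⟨x, y, z, h, rfl⟩

theorem btwP_cyclic {u v w : P X} (h : btwP u v w) : btwP v w u := by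
  rw [btwP_iff_realize] at h ⊢
  intro F
  obtain ⟨x, y, z, hxyz, h1, h2, h3⟩ := h F
  exact ⟨y, z, x, hxyz.cyclic_left, h2, h3, h1⟩

theorem btwP_refl_left {u w : P X} (hu : u ∈ YS X) (hw : w ∈ YS X) : btwP u u w := by
  rw [btwP_iff_realize]
  intro F
  obtain ⟨x, hx⟩ := realize hu F
  obtain ⟨y, hy⟩ := realize hw F
  exact ⟨x, x, y, btw_rfl_left, hx, hx, hy⟩

theorem btwP_refl_right {u w : P X} (hu : u ∈ YS X) (hw : w ∈ YS X) : btwP u w w := by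
  rw [btwP_iff_realize]
  intro F
  obtain ⟨x, hx⟩ := realize hu F
  obtain ⟨y, hy⟩ := realize hw F
  exact ⟨x, y, y, btw_rfl_right, hx, hy, hy⟩

theorem btwP_refl_left_right {u w : P X} (hu : u ∈ YS X) (hw : w ∈ YS X) : btwP u w u := by
  rw [btwP_iff_realize]
  intro F
  obtain ⟨x, hx⟩ := realize hu F
  obtain ⟨y, hy⟩ := realize hw F
  exact ⟨x, y, x, btw_rfl_left_right, hx, hy, hx⟩

/-- Reverse betweenness triples. -/
def btwT' (X : Type u) [CircularOrder X] : Set (P X × P X × P X) :=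
  {t | ∃ x y z : X, btw x y z ∧ t = (nuF z, nuF y, nuF x)}

theorem mem_closure_btwT'_iff {u v w : P X} :
    (u, v, w) ∈ closure (btwT' X) ↔ btwP w v u := by
  rw [btwP, mem_closure_triple, mem_closure_triple]
  constructor
  · intro h F
    obtain ⟨t, ⟨x, y, z, hxyz, rfl⟩, h1, h2, h3⟩ := h F
    exact ⟨(nuF x, nuF y, nuF z), ⟨x, y, z, hxyz, rfl⟩, h3, h2, h1⟩
  · intro h F
    obtain ⟨t, ⟨x, y, z, hxyz, rfl⟩, h1, h2, h3⟩ := h F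
    exact ⟨(nuF z, nuF y, nuF x), ⟨x, y, z, hxyz, rfl⟩, h3, h2, h1⟩

theorem btwP_total {u v w : P X} (hu : u ∈ YS X) (hv : v ∈ YS X) (hw : w ∈ YS X) :
    btwP u v w ∨ btwP w v u := by
  have hmem : (u, v, w) ∈ closure ((Set.range (nuF : X → P X)) ×ˢ
      ((Set.range (nuF : X → P X)) ×ˢ (Set.range (nuF : X → P X)))) := by
    rw [closure_prod_eq, closure_prod_eq]
    exact ⟨hu, hv, hw⟩
  have hsub : ((Set.range (nuF : X → P X)) ×ˢ
      ((Set.range (nuF : X → P X)) ×ˢ (Set.range (nuF : X → P X)))) ⊆ btwT X ∪ btwT' X := by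
    rintro ⟨a, b, c⟩ ⟨⟨x, rfl⟩, ⟨y, rfl⟩, ⟨z, rfl⟩⟩
    rcases btw_total x y z with h | h
    · exact Or.inl ⟨x, y, z, h, rfl⟩
    · exact Or.inr ⟨z, y, x, h, rfl⟩
  have := closure_mono hsub hmem
  rw [closure_union] at this
  rcases this with h | h
  · exact Or.inl h
  · exact Or.inr (mem_closure_btwT'_iff.1 h)

theorem PatNe.ne {E : Finset X} {p q : X} (h : PatNe E p q) : p ≠ q := by
  rintro rfl
  exact not_patNe_of_patEq (fun a _ b _ => Iff.rfl) h

theorem btwP_antisymm_aux {u v w : P X} (hu : u ∈ YS X) (hv : v ∈ YS X) (hw : w ∈ YS X)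
    (huv : u ≠ v) (hvw : v ≠ w) (huw : u ≠ w)
    (h1 : btwP u v w) (h2 : btwP w v u) : False := by
  obtain ⟨p1, hp1⟩ := Function.ne_iff.1 huv
  obtain ⟨p2, hp2⟩ := Function.ne_iff.1 hvw
  obtain ⟨p3, hp3⟩ := Function.ne_iff.1 huw
  classical
  set E : Finset X := {p1.1, p1.2, p2.1, p2.2, p3.1, p3.2} with hE
  have hE1 : p1.1 ∈ E := Finset.mem_insert_self _ _
  have hE2 : p1.2 ∈ E := Finset.mem_insert_of_mem (Finset.mem_insert_self _ _)
  have hE3 : p2.1 ∈ E :=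
    Finset.mem_insert_of_mem (Finset.mem_insert_of_mem (Finset.mem_insert_self _ _))
  have hE4 : p2.2 ∈ E := Finset.mem_insert_of_mem (Finset.mem_insert_of_mem
    (Finset.mem_insert_of_mem (Finset.mem_insert_self _ _)))
  have hE5 : p3.1 ∈ E := Finset.mem_insert_of_mem (Finset.mem_insert_of_mem
    (Finset.mem_insert_of_mem (Finset.mem_insert_of_mem (Finset.mem_insert_self _ _))))
  have hE6 : p3.2 ∈ E := Finset.mem_insert_of_mem (Finset.mem_insert_of_mem
    (Finset.mem_insert_of_mem (Finset.mem_insert_of_mem (Finset.mem_insert_of_mem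
      (Finset.mem_singleton_self _)))))
  set F : Finset (X × X) := E ×ˢ E with hF
  obtain ⟨x, y, z, hxyz, hx, hy, hz⟩ := btwP_iff_realize.1 h1 F
  obtain ⟨x', y', z', hxyz', hx', hy', hz'⟩ := btwP_iff_realize.1 h2 F
  have pat : ∀ (s : X) (g : P X), (∀ p ∈ F, nuF s p = g p) → ∀ a ∈ E, ∀ b ∈ E,
      (s ∈ K a b ↔ g (a, b) = true) := by
    intro s g hs a ha b hb
    rw [← nuF_eq_true_iff (p := (a, b)), hs (a, b) (Finset.mem_product.2 ⟨ha, hb⟩)]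
  have patEq : ∀ (s t : X) (g : P X), (∀ p ∈ F, nuF s p = g p) → (∀ p ∈ F, nuF t p = g p) →
      PatEq E s t := by
    intro s t g hs ht a ha b hb
    rw [pat s g hs a ha b hb, pat t g ht a ha b hb]
  have patNe : ∀ (s t : X) (g g' : P X) (p : X × X), p.1 ∈ E → p.2 ∈ E →
      g p ≠ g' p → (∀ q ∈ F, nuF s q = g q) → (∀ q ∈ F, nuF t q = g' q) → PatNe E s t := by
    intro s t g g' p hpa hpb hne hs ht
    refine ⟨p.1, hpa, p.2, hpb, fun hiff => hne ?_⟩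
    have h1 := pat s g hs p.1 hpa p.2 hpb
    have h2 := pat t g' ht p.1 hpa p.2 hpb
    rw [Bool.eq_iff_iff]
    rw [show ((p.1 : X), (p.2 : X)) = p from rfl] at h1 h2
    exact (h1.symm.trans hiff).trans h2
  have nxy : PatNe E x y := patNe x y u v p1 hE1 hE2 hp1 hx hy
  have nyz : PatNe E y z := patNe y z v w p2 hE3 hE4 hp2 hy hz
  have nzx : PatNe E z x := patNe z x w u p3 hE5 hE6 (Ne.symm hp3) hz hx
  have sxyz : sbtw x y z := sbtw_of_btw_ne hxyz nxy.ne nyz.ne (Ne.symm nzx.ne)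
  have nxy' : PatNe E x' y' := patNe x' y' w v p2 hE3 hE4 (Ne.symm hp2) hx' hy'
  have nyz' : PatNe E y' z' := patNe y' z' v u p1 hE1 hE2 (Ne.symm hp1) hy' hz'
  have nzx' : PatNe E z' x' := patNe z' x' u w p3 hE5 hE6 hp3 hz' hx'
  have sxyz' : sbtw x' y' z' := sbtw_of_btw_ne hxyz' nxy'.ne nyz'.ne (Ne.symm nzx'.ne)
  have hEx : PatEq E x z' := patEq x z' u hx hz'
  have hEy : PatEq E y y' := patEq y y' v hy hy'
  have hEz : PatEq E z x' := patEq z x' w hz hx'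
  exact (sbtw_asymm sxyz') (mainTransfer hEx hEy hEz nxy nyz nzx sxyz)

end CILC

namespace CILC

variable {X : Type u} [CircularOrder X]

theorem eq_nuF_of_diag {w : P X} (hw : w ∈ YS X) {a : X} (h : w (a, a) = true) : w = nuF a := by
  classical
  funext p
  obtain ⟨x, hx⟩ := realize hw {(a, a), p}
  have h1 : nuF x (a, a) = true := by rw [hx (a, a) (by simp)]; exact h
  have h2 : x = a := by
    have := nuF_eq_true_iff.1 h1
    rwa [K_self, Set.mem_singleton_iff] at this
  rw [← hx p (by simp), h2]

theorem nuF_diag (a : X) : nuF a (a, a) = true := nuF_eq_true_iff.2 (left_mem_K a a)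

theorem nuF_injective : Function.Injective (nuF : X → P X) := by
  intro a b h
  have : nuF b (a, a) = true := h ▸ nuF_diag a
  have := nuF_eq_true_iff.1 this
  rwa [K_self, Set.mem_singleton_iff, eq_comm] at this

theorem compl_coord {w : P X} (hw : w ∈ YS X) {a b : X} (hab : a ≠ b)
    (h : w (a, b) = false) : w (b, a) = true := by
  classical
  obtain ⟨x, hx⟩ := realize hw {(a, b), (b, a)}
  have h1 : nuF x (a, b) = false := by rw [hx (a, b) (by simp), h]
  have h2 : x ∈ K b a := (mem_K_or_mem_K hab x).resolve_left (nuF_eq_false_iff.1 h1)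
  rw [← hx (b, a) (by simp)]
  exact nuF_eq_true_iff.2 h2

theorem both_coords {w : P X} (hw : w ∈ YS X) {a b : X}
    (h1 : w (a, b) = true) (h2 : w (b, a) = true) : w = nuF a ∨ w = nuF b := by
  classical
  obtain ⟨x, hx⟩ := realize hw {(a, b), (b, a), (a, a), (b, b)}
  have k1 : x ∈ K a b := nuF_eq_true_iff.1 (by rw [hx (a, b) (by simp), h1])
  have k2 : x ∈ K b a := nuF_eq_true_iff.1 (by rw [hx (b, a) (by simp), h2])
  rcases mem_K_inter k1 k2 with h' | h'
  · left
    exact eq_nuF_of_diag hw (by rw [← hx (a, a) (by simp), h']; exact nuF_diag a)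
  · right
    exact eq_nuF_of_diag hw (by rw [← hx (b, b) (by simp), h']; exact nuF_diag b)

theorem patEq_of_realize {E : Finset X} {s t : X} {g : P X}
    (hs : ∀ p ∈ E ×ˢ E, nuF s p = g p) (ht : ∀ p ∈ E ×ˢ E, nuF t p = g p) : PatEq E s t := by
  intro a ha b hb
  rw [← nuF_eq_true_iff (x := s) (p := (a, b)), ← nuF_eq_true_iff (x := t) (p := (a, b)),
    hs (a, b) (Finset.mem_product.2 ⟨ha, hb⟩), ht (a, b) (Finset.mem_product.2 ⟨ha, hb⟩)]

theorem patNe_of_realize {E : Finset X} {s t : X} {g g' : P X} {p : X × X}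
    (hpa : p.1 ∈ E) (hpb : p.2 ∈ E) (hne : g p ≠ g' p)
    (hs : ∀ q ∈ E ×ˢ E, nuF s q = g q) (ht : ∀ q ∈ E ×ˢ E, nuF t q = g' q) : PatNe E s t := by
  refine ⟨p.1, hpa, p.2, hpb, fun hiff => hne ?_⟩
  rw [Bool.eq_iff_iff]
  have hpF : p ∈ E ×ˢ E := Finset.mem_product.2 ⟨hpa, hpb⟩
  have h1 : (s ∈ K p.1 p.2 ↔ g p = true) := by
    rw [← nuF_eq_true_iff (x := s) (p := p)]
    rw [hs p hpF]
  have h2 : (t ∈ K p.1 p.2 ↔ g' p = true) := by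
    rw [← nuF_eq_true_iff (x := t) (p := p)]
    rw [ht p hpF]
  exact (h1.symm.trans hiff).trans h2

theorem sbtw_transP_aux {a b c d : P X}
    (ha : a ∈ YS X) (hb : b ∈ YS X) (hc : c ∈ YS X) (hd : d ∈ YS X)
    (hab : a ≠ b) (hac : a ≠ c) (hbc : b ≠ c) (hbd : b ≠ d) (hcd : c ≠ d) (had : a ≠ d)
    (h1 : btwP a b c) (h2 : btwP b d c) (h3 : btwP c d a) : False := by
  classical
  obtain ⟨pab, hpab⟩ := Function.ne_iff.1 hab
  obtain ⟨pac, hpac⟩ := Function.ne_iff.1 hac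
  obtain ⟨pbc, hpbc⟩ := Function.ne_iff.1 hbc
  obtain ⟨pbd, hpbd⟩ := Function.ne_iff.1 hbd
  obtain ⟨pcd, hpcd⟩ := Function.ne_iff.1 hcd
  obtain ⟨pad, hpad⟩ := Function.ne_iff.1 had
  set E : Finset X := {pab.1, pab.2, pac.1, pac.2, pbc.1, pbc.2, pbd.1, pbd.2,
    pcd.1, pcd.2, pad.1, pad.2} with hE
  have hmem : ∀ q ∈ ([pab, pac, pbc, pbd, pcd, pad] : List (X × X)), q.1 ∈ E ∧ q.2 ∈ E := by
    intro q hq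
    fin_cases hq <;> constructor <;> simp [hE]
  have h1ab := hmem pab (by simp); have h1ac := hmem pac (by simp)
  have h1bc := hmem pbc (by simp); have h1bd := hmem pbd (by simp)
  have h1cd := hmem pcd (by simp); have h1ad := hmem pad (by simp)
  obtain ⟨xa, xb, xc, hb1, ha1, ha2, ha3⟩ := btwP_iff_realize.1 h1 (E ×ˢ E)
  obtain ⟨yb, yd, yc, hb2, hb1', hb2', hb3'⟩ := btwP_iff_realize.1 h2 (E ×ˢ E)
  obtain ⟨zc, zd, za, hb3, hc1, hc2, hc3⟩ := btwP_iff_realize.1 h3 (E ×ˢ E)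
  -- patterns within triple 1
  have nab : PatNe E xa xb := patNe_of_realize h1ab.1 h1ab.2 hpab ha1 ha2
  have nbc : PatNe E xb xc := patNe_of_realize h1bc.1 h1bc.2 hpbc ha2 ha3
  have nca : PatNe E xc xa := patNe_of_realize h1ac.1 h1ac.2 (Ne.symm hpac) ha3 ha1
  have s1 : sbtw xa xb xc := sbtw_of_btw_ne hb1 nab.ne nbc.ne (Ne.symm nca.ne)
  -- triple 2
  have nbd2 : PatNe E yb yd := patNe_of_realize h1bd.1 h1bd.2 hpbd hb1' hb2'
  have ndc2 : PatNe E yd yc := patNe_of_realize h1cd.1 h1cd.2 (Ne.symm hpcd) hb2' hb3'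
  have ncb2 : PatNe E yc yb := patNe_of_realize h1bc.1 h1bc.2 (Ne.symm hpbc) hb3' hb1'
  have s2 : sbtw yb yd yc := sbtw_of_btw_ne hb2 nbd2.ne ndc2.ne (Ne.symm ncb2.ne)
  -- triple 3
  have ncd3 : PatNe E zc zd := patNe_of_realize h1cd.1 h1cd.2 hpcd hc1 hc2
  have nda3 : PatNe E zd za := patNe_of_realize h1ad.1 h1ad.2 (Ne.symm hpad) hc2 hc3
  have nac3 : PatNe E za zc := patNe_of_realize h1ac.1 h1ac.2 hpac hc3 hc1
  have s3 : sbtw zc zd za := sbtw_of_btw_ne hb3 ncd3.ne nda3.ne (Ne.symm nac3.ne)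
  -- transfer triple 2 into the x-realizations: sbtw xb yd xc
  have eyb : PatEq E yb xb := patEq_of_realize hb1' ha2
  have eyc : PatEq E yc xc := patEq_of_realize hb3' ha3
  have eyd : PatEq E yd yd := fun _ _ _ _ => Iff.rfl
  have t2 : sbtw xb yd xc := mainTransfer eyb eyd eyc nbd2 ndc2 ncb2 s2
  -- transfer triple 3: sbtw xc yd xa
  have ezc : PatEq E zc xc := patEq_of_realize hc1 ha3
  have eza : PatEq E za xa := patEq_of_realize hc3 ha1
  have ezd : PatEq E zd yd := patEq_of_realize hc2 hb2'
  have t3 : sbtw xc yd xa := mainTransfer ezc ezd eza ncd3 nda3 nac3 s3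
  have := s1.trans_left t2
  exact sbtw_asymm this t3

/-- The circular order on the compactification. -/
noncomputable instance circY : CircularOrder (YS X) where
  btw u v w := btwP u.1 v.1 w.1
  sbtw u v w := btwP u.1 v.1 w.1 ∧ ¬btwP w.1 v.1 u.1
  btw_refl u := btwP_refl_left u.2 u.2
  btw_cyclic_left := btwP_cyclic
  sbtw_iff_btw_not_btw := Iff.rfl
  btw_antisymm := by
    rintro ⟨u, hu⟩ ⟨v, hv⟩ ⟨w, hw⟩ h1 h2
    by_cases huv : u = v
    · exact Or.inl (Subtype.ext huv)
    by_cases hvw : v = w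
    · exact Or.inr (Or.inl (Subtype.ext hvw))
    by_cases huw : u = w
    · exact Or.inr (Or.inr (Subtype.ext huw.symm))
    · exact absurd h2 (fun h2 => btwP_antisymm_aux hu hv hw huv hvw huw h1 h2)
  btw_total := fun u v w => btwP_total u.2 v.2 w.2
  sbtw_trans_left := by
    rintro ⟨a, ha⟩ ⟨b, hb⟩ ⟨c, hc⟩ ⟨d, hd⟩ h1 h2
    obtain ⟨h1, h1'⟩ := h1
    obtain ⟨h2, h2'⟩ := h2
    simp only at h1 h1' h2 h2' ⊢
    have hab : a ≠ b := by rintro rfl; exact h1' (btwP_refl_right hc ha)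
    have hbc : b ≠ c := by rintro rfl; exact h1' (btwP_refl_left hc ha)
    have hac : a ≠ c := by rintro rfl; exact h1' (btwP_refl_left_right ha hb)
    have hbd : b ≠ d := by rintro rfl; exact h2' (btwP_refl_right hc hb)
    have hdc : d ≠ c := by rintro rfl; exact h2' (btwP_refl_left hc hb)
    have had : a ≠ d := by
      rintro rfl
      exact h2' (btwP_cyclic (btwP_cyclic h1))
    have key : ¬btwP c d a := fun h3 => sbtw_transP_aux ha hb hc hd hab hac hbc hbd
      (fun h => hdc h.symm) had h1 h2 h3
    refine ⟨?_, key⟩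
    rcases btwP_total ha hd hc with h | h
    · exact h
    · exact absurd h key

end CILC

namespace CILC

open Set Topology

variable {X : Type u} [CircularOrder X]

/-- The compactification as a type. -/
abbrev Yt (X : Type u) [CircularOrder X] := ↥(YS X)

/-- The embedding into the compactification. -/
noncomputable def nuY (x : X) : Yt X := ⟨nuF x, nuF_mem_YS x⟩

/-- The strict betweenness of the compactification, as a bare relation. -/
def RY (X : Type u) [CircularOrder X] : Yt X → Yt X → Yt X → Prop :=
  fun u v w => btwP u.1 v.1 w.1 ∧ ¬btwP w.1 v.1 u.1

theorem sbtw_Yt_iff {u v w : Yt X} : sbtw u v w ↔ RY X u v w := Iff.rfl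
theorem btw_Yt_iff {u v w : Yt X} : btw u v w ↔ btwP u.1 v.1 w.1 := Iff.rfl

instance : CompactSpace (Yt X) := isCompact_iff_compactSpace.mp (isClosed_closure.isCompact)

theorem nuY_injective : Function.Injective (nuY : X → Yt X) := fun a b h =>
  nuF_injective (congrArg Subtype.val h)

theorem tern_self (u : Yt X) : ternIcc (RY X) u u = {u} := by
  ext w
  simp only [ternIcc, Set.mem_union, Set.mem_setOf_eq, Set.mem_insert_iff,
    Set.mem_singleton_iff, or_self]
  constructor
  · rintro (h | h)
    · exact absurd h (sbtw_irrefl_left_right (a := u) (b := w))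
    · exact h
  · exact fun h => Or.inr h

theorem tern_eq_btw {u v : Yt X} (huv : u ≠ v) :
    ternIcc (RY X) u v = {w : Yt X | btwP u.1 w.1 v.1} := by
  ext w
  simp only [ternIcc, Set.mem_union, Set.mem_setOf_eq, Set.mem_insert_iff,
    Set.mem_singleton_iff]
  constructor
  · rintro ((h : RY X u w v) | rfl | rfl)
    · exact h.1
    · exact btwP_refl_left w.2 v.2
    · exact btwP_refl_right u.2 w.2
  · intro h
    by_cases hwu : w = u
    · exact Or.inr (Or.inl hwu)
    by_cases hwv : w = v
    · exact Or.inr (Or.inr hwv)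
    refine Or.inl ⟨h, fun h2 => ?_⟩
    exact btwP_antisymm_aux u.2 w.2 v.2
      (fun he => hwu (Subtype.ext he.symm)) (fun he => hwv (Subtype.ext he))
      (fun he => huv (Subtype.ext he)) h h2

theorem isClosed_btwP_set (u v : Yt X) : IsClosed {w : Yt X | btwP u.1 w.1 v.1} := by
  have hc : Continuous (fun w : Yt X => ((u.1, w.1, v.1) : P X × P X × P X)) :=
    continuous_const.prodMk ((continuous_subtype_val).prodMk continuous_const)
  exact isClosed_closure.preimage hc

theorem isClosed_ternIcc (u v : Yt X) : IsClosed (ternIcc (RY X) u v) := by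
  by_cases huv : u = v
  · subst huv; rw [tern_self]; exact isClosed_singleton
  · rw [tern_eq_btw huv]; exact isClosed_btwP_set u v

theorem continuous_coord (p : X × X) : Continuous (fun w : Yt X => w.1 p) :=
  (continuous_apply p).comp continuous_subtype_val

theorem isOpen_cylY (p : X × X) (b : Bool) : IsOpen {w : Yt X | w.1 p = b} :=
  (continuous_coord p).isOpen_preimage {b} (isOpen_discrete _)

theorem isClosed_cylY (p : X × X) (b : Bool) : IsClosed {w : Yt X | w.1 p = b} :=
  IsClosed.preimage (continuous_coord p) (isClosed_discrete {b})

/-- `btwP (ν a) w (ν b)` forces the `(a,b)` coordinate of `w` to be `true`. -/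
theorem coord_true_of_btwP {a b : X} (hab : a ≠ b) {w : P X} (h : btwP (nuF a) w (nuF b)) :
    w (a, b) = true := by
  classical
  obtain ⟨x, y, z, hxyz, h1, h2, h3⟩ := btwP_iff_realize.1 h {(a, a), (b, b), (a, b)}
  have hx : x = a := by
    have := h1 (a, a) (by simp)
    rw [nuF_diag a] at this
    have := nuF_eq_true_iff.1 this
    rwa [K_self, Set.mem_singleton_iff] at this
  have hz : z = b := by
    have := h3 (b, b) (by simp)
    rw [nuF_diag b] at this
    have := nuF_eq_true_iff.1 this
    rwa [K_self, Set.mem_singleton_iff] at this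
  subst hx; subst hz
  rw [← h2 (x, z) (by simp)]
  exact nuF_eq_true_iff.2 ((mem_K_iff_btw hab).2 hxyz)

theorem tern_eq_cyl (a b : X) :
    ternIcc (RY X) (nuY a) (nuY b) = {w : Yt X | w.1 (a, b) = true} := by
  by_cases hab : a = b
  · subst hab
    rw [tern_self]
    ext w
    simp only [Set.mem_singleton_iff, Set.mem_setOf_eq]
    constructor
    · rintro rfl; exact nuF_diag a
    · intro h; exact Subtype.ext (eq_nuF_of_diag w.2 h)
  · have hne : nuY a ≠ nuY b := fun h => hab (nuY_injective h)
    rw [tern_eq_btw hne]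
    ext w
    simp only [Set.mem_setOf_eq]
    constructor
    · exact fun h => coord_true_of_btwP hab h
    · intro h
      by_cases hwa : w = nuY a
      · subst hwa; exact btwP_refl_left (nuY a).2 (nuY b).2
      by_cases hwb : w = nuY b
      · subst hwb; exact btwP_refl_right (nuY a).2 (nuY b).2
      rcases btwP_total (nuY a).2 w.2 (nuY b).2 with h' | h'
      · exact h'
      · exfalso
        have : w.1 (b, a) = true := coord_true_of_btwP (Ne.symm hab) h'
        rcases both_coords w.2 h this with he | he
        · exact hwa (Subtype.ext he)
        · exact hwb (Subtype.ext he)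

theorem mem_C_iff {a : X} {w : Yt X} : w.1 (a, a) = false ↔ w ≠ nuY a := by
  constructor
  · intro h he
    subst he
    have hd := nuF_diag a
    rw [show (nuY a).1 = nuF a from rfl, hd] at h
    exact Bool.noConfusion h
  · intro h
    cases hc : w.1 (a, a)
    · rfl
    · exact absurd (Subtype.ext (eq_nuF_of_diag w.2 hc)) h

theorem K_subset_left {a x y : X} (hx : x ≠ a) (hy : y ≠ a) (h : btw a x y) :
    K a x ⊆ K a y := by
  intro z hz
  rcases mem_K_iff.1 hz with hs | hza | hzx
  · by_cases hxy : x = y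
    · exact hxy ▸ hz
    · exact mem_K_of_sbtw (hs.trans_right (sbtw_of_btw_ne h (Ne.symm hx) hxy (Ne.symm hy)))
  · exact hza ▸ left_mem_K a y
  · rw [hzx]; exact (mem_K_iff_btw (Ne.symm hy)).2 h

theorem K_subset_right {a x y : X} (hx : x ≠ a) (hy : y ≠ a) (h : btw y x a) :
    K x a ⊆ K y a := by
  intro z hz
  rcases mem_K_iff.1 hz with hs | hzx | hza
  · by_cases hxy : x = y
    · exact hxy ▸ hz
    · exact mem_K_of_sbtw ((sbtw_of_btw_ne h (fun he => hxy he.symm) hx hy).trans_left hs)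
  · rw [hzx]; exact (mem_K_iff_btw hy).2 h
  · exact hza ▸ right_mem_K y a

end CILC

namespace CILC

open Set Topology TopologicalSpace

variable {X : Type u} [CircularOrder X]

theorem coord_mono {w : P X} (hw : w ∈ YS X) {p q : X × X}
    (h : K p.1 p.2 ⊆ K q.1 q.2) (hp : w p = true) : w q = true := by
  classical
  obtain ⟨x, hx⟩ := realize hw {p, q}
  have h1 : nuF x p = true := by rw [hx p (by simp), hp]
  rw [← hx q (by simp)]
  exact nuF_eq_true_iff.2 (h (nuF_eq_true_iff.1 h1))

theorem nuY_coord_false {x a : X} (h : x ≠ a) : (nuY x).1 (a, a) = false :=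
  nuF_eq_false_iff.2 (by rw [K_self]; simpa using h)

theorem exists_extremal (a : X) (hCne : ({w : Yt X | w.1 (a, a) = false}).Nonempty)
    (c : X → X × X)
    (hchain : ∀ x y : X, x ≠ a → y ≠ a →
      K (c x).1 (c x).2 ⊆ K (c y).1 (c y).2 ∨ K (c y).1 (c y).2 ⊆ K (c x).1 (c x).2) :
    ∃ u : Yt X, u.1 (a, a) = false ∧ ∀ x : X, x ≠ a →
      (∃ w : Yt X, w.1 (a, a) = false ∧ w.1 (c x) = true) → u.1 (c x) = true := by
  classical
  set C : Set (Yt X) := {w : Yt X | w.1 (a, a) = false} with hCdef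
  have hCcl : IsClosed C := isClosed_cylY (a, a) false
  obtain ⟨w₀, hw₀⟩ := hCne
  obtain ⟨x₀, hx₀⟩ := realize w₀.2 {(a, a)}
  have hx₀a : x₀ ≠ a := by
    have := hx₀ (a, a) (by simp)
    rw [hw₀] at this
    have := nuF_eq_false_iff.1 this
    rw [K_self] at this
    simpa using this
  haveI : Nonempty {x : X // x ≠ a} := ⟨⟨x₀, hx₀a⟩⟩
  set S : {x : X // x ≠ a} → Set (Yt X) := fun x => C ∩ {w : Yt X | w.1 (c x.1) = true} with hSdef
  set T : {x : X // x ≠ a} → Set (Yt X) := fun x => if (S x).Nonempty then S x else C with hTdef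
  have hTsubC : ∀ x, T x ⊆ C := by
    intro x
    rw [hTdef]
    dsimp only
    split
    · exact Set.inter_subset_left
    · exact Set.Subset.rfl
  have hSmono : ∀ x y : {x : X // x ≠ a}, S x ⊆ S y ∨ S y ⊆ S x := by
    intro x y
    rcases hchain x.1 y.1 x.2 y.2 with h | h
    · exact Or.inl (fun w hw => ⟨hw.1, coord_mono w.2 h hw.2⟩)
    · exact Or.inr (fun w hw => ⟨hw.1, coord_mono w.2 h hw.2⟩)
  have hTmono : ∀ x y, T x ⊆ T y ∨ T y ⊆ T x := by
    intro x y
    rw [hTdef]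
    dsimp only
    split <;> split
    · exact hSmono x y
    · rename_i h1 h2
      left
      intro w hw
      exact (hw.1 : w ∈ C)
    · rename_i h1 h2
      right
      intro w hw
      exact (hw.1 : w ∈ C)
    · exact Or.inl Set.Subset.rfl
  have hTdir : Directed (· ⊇ ·) T := fun x y => by
    rcases hTmono x y with h | h
    · exact ⟨x, Set.Subset.rfl, h⟩
    · exact ⟨y, h, Set.Subset.rfl⟩
  have hTne : ∀ x, (T x).Nonempty := by
    intro x
    rw [hTdef]
    dsimp only
    split
    · assumption
    · exact ⟨w₀, hw₀⟩
  have hTcl : ∀ x, IsClosed (T x) := by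
    intro x
    rw [hTdef]
    dsimp only
    split
    · exact hCcl.inter (isClosed_cylY (c x.1) true)
    · exact hCcl
  have hTcp : ∀ x, IsCompact (T x) := fun x => (hTcl x).isCompact
  obtain ⟨u, hu⟩ :=
    IsCompact.nonempty_iInter_of_directed_nonempty_isCompact_isClosed T hTdir hTne hTcp hTcl
  refine ⟨u, hTsubC _ (Set.mem_iInter.1 hu ⟨x₀, hx₀a⟩), ?_⟩
  intro x hxa hex
  have hSne : (S ⟨x, hxa⟩).Nonempty := by
    obtain ⟨w, hw1, hw2⟩ := hex
    exact ⟨w, hw1, hw2⟩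
  have : u ∈ T ⟨x, hxa⟩ := Set.mem_iInter.1 hu ⟨x, hxa⟩
  rw [hTdef] at this
  dsimp only at this
  rw [if_pos hSne] at this
  exact this.2

theorem exists_endpoint_left (a : X) (hCne : ({w : Yt X | w.1 (a, a) = false}).Nonempty) :
    ∃ u : Yt X, u.1 (a, a) = false ∧ ∀ x : X, x ≠ a →
      (∃ w : Yt X, w.1 (a, a) = false ∧ w.1 (a, x) = true) → u.1 (a, x) = true := by
  refine exists_extremal a hCne (fun x => (a, x)) ?_
  intro x y hx hy
  rcases btw_total a x y with h | h
  · exact Or.inl (K_subset_left hx hy h)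
  · exact Or.inr (K_subset_left hy hx h.cyclic_left.cyclic_left)

theorem exists_endpoint_right (a : X) (hCne : ({w : Yt X | w.1 (a, a) = false}).Nonempty) :
    ∃ v : Yt X, v.1 (a, a) = false ∧ ∀ x : X, x ≠ a →
      (∃ w : Yt X, w.1 (a, a) = false ∧ w.1 (x, a) = true) → v.1 (x, a) = true := by
  refine exists_extremal a hCne (fun x => (x, a)) ?_
  intro x y hx hy
  rcases btw_total y x a with h | h
  · exact Or.inl (K_subset_right hx hy h)
  · exact Or.inr (K_subset_right hy hx h.cyclic_left)

end CILC

namespace CILC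

open Set Topology TopologicalSpace

variable {X : Type u} [CircularOrder X]

section Endpoints

variable {a : X} {u v : Yt X}

theorem claim1 (hu : u.1 (a, a) = false) (hv : v.1 (a, a) = false)
    (hup : ∀ x : X, x ≠ a →
      (∃ w : Yt X, w.1 (a, a) = false ∧ w.1 (a, x) = true) → u.1 (a, x) = true)
    (hvp : ∀ x : X, x ≠ a →
      (∃ w : Yt X, w.1 (a, a) = false ∧ w.1 (x, a) = true) → v.1 (x, a) = true)
    {w : Yt X} (hw : w.1 (a, a) = false) : btwP u.1 w.1 v.1 := by
  classical
  rw [btwP_iff_realize]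
  intro F
  set F₁ : Finset (X × X) := insert (a, a) F with hF₁
  obtain ⟨s₀, hs⟩ := realize w.2 F₁
  have hs₀a : s₀ ≠ a := by
    have := hs (a, a) (by simp [hF₁])
    rw [hw] at this
    have := nuF_eq_false_iff.1 this
    rw [K_self] at this
    simpa using this
  have hus : u.1 (a, s₀) = true :=
    hup s₀ hs₀a ⟨nuY s₀, nuY_coord_false hs₀a, nuF_eq_true_iff.2 (right_mem_K a s₀)⟩
  have hvs : v.1 (s₀, a) = true :=
    hvp s₀ hs₀a ⟨nuY s₀, nuY_coord_false hs₀a, nuF_eq_true_iff.2 (left_mem_K s₀ a)⟩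
  obtain ⟨r, hr⟩ := realize u.2 (insert (a, s₀) F₁)
  obtain ⟨t, ht⟩ := realize v.2 (insert (s₀, a) F₁)
  have hra : r ≠ a := by
    have := hr (a, a) (by simp [hF₁])
    rw [hu] at this
    have := nuF_eq_false_iff.1 this
    rw [K_self] at this
    simpa using this
  have hta : t ≠ a := by
    have := ht (a, a) (by simp [hF₁])
    rw [hv] at this
    have := nuF_eq_false_iff.1 this
    rw [K_self] at this
    simpa using this
  have hrK : r ∈ K a s₀ := nuF_eq_true_iff.1 (by rw [hr (a, s₀) (by simp), hus])
  have htK : t ∈ K s₀ a := nuF_eq_true_iff.1 (by rw [ht (s₀, a) (by simp), hvs])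
  have hbtw : btw r s₀ t := by
    by_cases hrs : r = s₀
    · rw [hrs]; exact btw_rfl_left
    by_cases hts : t = s₀
    · rw [hts]; exact btw_rfl_right
    by_cases hrt : r = t
    · rw [← hrt]; exact btw_rfl_left_right
    have h1 : sbtw a r s₀ :=
      sbtw_of_btw_ne (btw_of_mem_K hrK) (Ne.symm hra) hrs (Ne.symm hs₀a)
    have h2 : sbtw s₀ t a :=
      sbtw_of_btw_ne (btw_of_mem_K htK) (fun h => hts h.symm) hta hs₀a
    exact (sbtw_chain4 h1 h2).btw
  exact ⟨r, s₀, t, hbtw,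
    fun p hp => hr p (Finset.mem_insert_of_mem (Finset.mem_insert_of_mem hp)),
    fun p hp => hs p (Finset.mem_insert_of_mem hp),
    fun p hp => ht p (Finset.mem_insert_of_mem (Finset.mem_insert_of_mem hp))⟩

theorem claim2 (hu : u.1 (a, a) = false) (hv : v.1 (a, a) = false)
    (hup : ∀ x : X, x ≠ a →
      (∃ w : Yt X, w.1 (a, a) = false ∧ w.1 (a, x) = true) → u.1 (a, x) = true)
    (hvp : ∀ x : X, x ≠ a →
      (∃ w : Yt X, w.1 (a, a) = false ∧ w.1 (x, a) = true) → v.1 (x, a) = true)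
    (huv : u ≠ v) : ¬btwP u.1 (nuF a) v.1 := by
  classical
  intro hbtw
  obtain ⟨p, hp⟩ := Function.ne_iff.1 (fun h : u.1 = v.1 => huv (Subtype.ext h))
  -- stage 1
  obtain ⟨r₀, s₀', t₀, hb0, hr0, hs0, ht0⟩ := btwP_iff_realize.1 hbtw {p, (a, a)}
  have hs₀ : s₀' = a := by
    have := hs0 (a, a) (by simp)
    rw [nuF_diag a] at this
    have := nuF_eq_true_iff.1 this
    rwa [K_self, Set.mem_singleton_iff] at this
  subst hs₀
  have hr₀a : r₀ ≠ s₀' := by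
    have := hr0 (s₀', s₀') (by simp)
    rw [hu] at this
    have := nuF_eq_false_iff.1 this
    rw [K_self] at this
    simpa using this
  have ht₀a : t₀ ≠ s₀' := by
    have := ht0 (s₀', s₀') (by simp)
    rw [hv] at this
    have := nuF_eq_false_iff.1 this
    rw [K_self] at this
    simpa using this
  have hrt₀ : r₀ ≠ t₀ := by
    intro h
    apply hp
    rw [← hr0 p (by simp), ← ht0 p (by simp), h]
  have hsb0 : sbtw r₀ s₀' t₀ := sbtw_of_btw_ne hb0 hr₀a (Ne.symm ht₀a) hrt₀
  -- extremality facts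
  have hut₀ : u.1 (s₀', t₀) = true :=
    hup t₀ ht₀a ⟨nuY t₀, nuY_coord_false ht₀a, nuF_eq_true_iff.2 (right_mem_K s₀' t₀)⟩
  have hvr₀ : v.1 (r₀, s₀') = true :=
    hvp r₀ hr₀a ⟨nuY r₀, nuY_coord_false hr₀a, nuF_eq_true_iff.2 (left_mem_K r₀ s₀')⟩
  -- stage 2
  obtain ⟨r₁, s₁', t₁, hb1, hr1, hs1, ht1⟩ :=
    btwP_iff_realize.1 hbtw {p, (s₀', s₀'), (s₀', t₀), (r₀, s₀')}
  have hs₁ : s₁' = s₀' := by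
    have := hs1 (s₀', s₀') (by simp)
    rw [nuF_diag s₀'] at this
    have := nuF_eq_true_iff.1 this
    rwa [K_self, Set.mem_singleton_iff] at this
  subst hs₁
  have hr₁a : r₁ ≠ s₁' := by
    have := hr1 (s₁', s₁') (by simp)
    rw [hu] at this
    have := nuF_eq_false_iff.1 this
    rw [K_self] at this
    simpa using this
  have ht₁a : t₁ ≠ s₁' := by
    have := ht1 (s₁', s₁') (by simp)
    rw [hv] at this
    have := nuF_eq_false_iff.1 this
    rw [K_self] at this
    simpa using this
  have hrt₁ : r₁ ≠ t₁ := by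
    intro h
    apply hp
    rw [← hr1 p (by simp), ← ht1 p (by simp), h]
  have hsb1 : sbtw r₁ s₁' t₁ := sbtw_of_btw_ne hb1 hr₁a (Ne.symm ht₁a) hrt₁
  have hr₁K : r₁ ∈ K s₁' t₀ := nuF_eq_true_iff.1 (by rw [hr1 (s₁', t₀) (by simp), hut₀])
  have ht₁K : t₁ ∈ K r₀ s₁' := nuF_eq_true_iff.1 (by rw [ht1 (r₀, s₁') (by simp), hvr₀])
  -- the contradiction
  have h1 : sbtw s₁' t₁ r₁ := hsb1.cyclic_left
  have h2 : sbtw s₁' t₁ t₀ := by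
    by_cases hrt : r₁ = t₀
    · rwa [hrt] at h1
    · exact h1.trans_right
        (sbtw_of_btw_ne (btw_of_mem_K hr₁K) (Ne.symm hr₁a) hrt (Ne.symm ht₀a))
  have h3 : sbtw s₁' t₀ r₀ := hsb0.cyclic_left
  have h4 : sbtw s₁' t₁ r₀ := h2.trans_right h3
  exact (sbtw_iff_not_btw.1 h4) (btw_of_mem_K ht₁K)

theorem claim0 (hu : u.1 (a, a) = false)
    (hup : ∀ x : X, x ≠ a →
      (∃ w : Yt X, w.1 (a, a) = false ∧ w.1 (a, x) = true) → u.1 (a, x) = true)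
    (hvp : ∀ x : X, x ≠ a →
      (∃ w : Yt X, w.1 (a, a) = false ∧ w.1 (x, a) = true) → u.1 (x, a) = true)
    {w : Yt X} (hw : w.1 (a, a) = false) : w = u := by
  classical
  by_contra hne
  obtain ⟨q, hq⟩ := Function.ne_iff.1 (fun h : w.1 = u.1 => hne (Subtype.ext h))
  obtain ⟨s₀, hs⟩ := realize w.2 {(a, a), q}
  have hs₀a : s₀ ≠ a := by
    have := hs (a, a) (by simp)
    rw [hw] at this
    have := nuF_eq_false_iff.1 this
    rw [K_self] at this
    simpa using this
  have h1 : u.1 (a, s₀) = true :=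
    hup s₀ hs₀a ⟨nuY s₀, nuY_coord_false hs₀a, nuF_eq_true_iff.2 (right_mem_K a s₀)⟩
  have h2 : u.1 (s₀, a) = true :=
    hvp s₀ hs₀a ⟨nuY s₀, nuY_coord_false hs₀a, nuF_eq_true_iff.2 (left_mem_K s₀ a)⟩
  obtain ⟨r, hr⟩ := realize u.2 {(a, a), q, (a, s₀), (s₀, a)}
  have hra : r ≠ a := by
    have := hr (a, a) (by simp)
    rw [hu] at this
    have := nuF_eq_false_iff.1 this
    rw [K_self] at this
    simpa using this
  have hrK1 : r ∈ K a s₀ := nuF_eq_true_iff.1 (by rw [hr (a, s₀) (by simp), h1])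
  have hrK2 : r ∈ K s₀ a := nuF_eq_true_iff.1 (by rw [hr (s₀, a) (by simp), h2])
  have hrs : r = s₀ := by
    rcases mem_K_inter hrK1 hrK2 with h | h
    · exact absurd h hra
    · exact h
  apply hq
  rw [← hs q (by simp), ← hr q (by simp), hrs]

end Endpoints

theorem isOpen_singleton_nuY (a : X) :
    (ternaryTopology (RY X)).IsOpen {nuY a} := by
  by_cases hC : ({w : Yt X | w.1 (a, a) = false}).Nonempty
  · obtain ⟨u, hu, hup⟩ := exists_endpoint_left a hC
    obtain ⟨v, hv, hvp⟩ := exists_endpoint_right a hC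
    by_cases huv : u = v
    · subst huv
      have hset : {nuY a} = (ternIcc (RY X) u u)ᶜ := by
        rw [tern_self]
        ext w
        simp only [Set.mem_singleton_iff, Set.mem_compl_iff]
        constructor
        · rintro rfl h
          rw [← h] at hu
          rw [show (nuY a).1 = nuF a from rfl, nuF_diag] at hu
          exact Bool.noConfusion hu
        · intro h
          by_contra hne
          exact h (claim0 hu hup hvp (mem_C_iff.2 hne))
      rw [hset]
      exact GenerateOpen.basic _ ⟨u, u, rfl⟩
    · have hset : {nuY a} = (ternIcc (RY X) u v)ᶜ := by
        rw [tern_eq_btw huv]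
        ext w
        simp only [Set.mem_singleton_iff, Set.mem_compl_iff, Set.mem_setOf_eq]
        constructor
        · rintro rfl
          exact claim2 hu hv hup hvp huv
        · intro h
          by_contra hne
          exact h (claim1 hu hv hup hvp (mem_C_iff.2 hne))
      rw [hset]
      exact GenerateOpen.basic _ ⟨u, v, rfl⟩
  · have hset : {nuY a} = (Set.univ : Set (Yt X)) := by
      ext w
      simp only [Set.mem_singleton_iff, Set.mem_univ, iff_true]
      by_contra hne
      exact hC ⟨w, mem_C_iff.2 hne⟩
    rw [hset]
    exact GenerateOpen.univ

end CILC

namespace CILC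

open Set Topology TopologicalSpace

variable {X : Type u} [CircularOrder X]

theorem gopen_union {α : Type*} {g : Set (Set α)} {s t : Set α}
    (hs : GenerateOpen g s) (ht : GenerateOpen g t) : GenerateOpen g (s ∪ t) := by
  have := GenerateOpen.sUnion {s, t} (g := g) (by
    rintro u (rfl | rfl)
    · exact hs
    · exact ht)
  simpa using this

theorem ternary_isOpen_iff {s : Set (Yt X)} :
    (ternaryTopology (RY X)).IsOpen s ↔
      GenerateOpen {s : Set (Yt X) | ∃ a b : Yt X, s = (ternIcc (RY X) a b)ᶜ} s :=
  Iff.rfl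

theorem cyl_diag_eq (a : X) : {w : Yt X | w.1 (a, a) = true} = {nuY a} := by
  ext w
  simp only [Set.mem_setOf_eq, Set.mem_singleton_iff]
  constructor
  · intro h
    exact Subtype.ext (eq_nuF_of_diag w.2 h)
  · rintro rfl
    exact nuF_diag a

theorem cylTrue_decomp {a b : X} (hab : a ≠ b) :
    {w : Yt X | w.1 (a, b) = true} =
      ({nuY a} ∪ {nuY b}) ∪ {w : Yt X | w.1 (b, a) = true}ᶜ := by
  ext w
  simp only [Set.mem_setOf_eq, Set.mem_union, Set.mem_singleton_iff, Set.mem_compl_iff]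
  constructor
  · intro h
    by_cases hwa : w = nuY a
    · exact Or.inl (Or.inl hwa)
    by_cases hwb : w = nuY b
    · exact Or.inl (Or.inr hwb)
    right
    intro h'
    rcases both_coords w.2 h h' with he | he
    · exact hwa (Subtype.ext he)
    · exact hwb (Subtype.ext he)
  · rintro ((rfl | rfl) | h)
    · exact nuF_eq_true_iff.2 (left_mem_K a b)
    · exact nuF_eq_true_iff.2 (right_mem_K a b)
    · have : w.1 (b, a) = false := by
        cases hc : w.1 (b, a)
        · rfl
        · exact absurd hc h
      exact compl_coord w.2 (Ne.symm hab) this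

theorem isOpen_tern_cylTrue (p : X × X) :
    (ternaryTopology (RY X)).IsOpen {w : Yt X | w.1 p = true} := by
  obtain ⟨a, b⟩ := p
  by_cases hab : a = b
  · subst hab
    rw [cyl_diag_eq]
    exact isOpen_singleton_nuY a
  · rw [cylTrue_decomp hab]
    refine gopen_union (gopen_union (isOpen_singleton_nuY a) (isOpen_singleton_nuY b)) ?_
    have : {w : Yt X | w.1 (b, a) = true}ᶜ = (ternIcc (RY X) (nuY b) (nuY a))ᶜ := by
      rw [tern_eq_cyl]
    rw [this]
    exact GenerateOpen.basic _ ⟨nuY b, nuY a, rfl⟩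

theorem isOpen_tern_cylFalse (p : X × X) :
    (ternaryTopology (RY X)).IsOpen {w : Yt X | w.1 p = false} := by
  have : {w : Yt X | w.1 p = false} = (ternIcc (RY X) (nuY p.1) (nuY p.2))ᶜ := by
    rw [tern_eq_cyl]
    ext w
    simp only [Set.mem_setOf_eq, Set.mem_compl_iff]
    cases hc : w.1 (p.1, p.2) <;> simp_all
  rw [this]
  exact GenerateOpen.basic _ ⟨nuY p.1, nuY p.2, rfl⟩

theorem isOpen_tern_coord_mem (p : X × X) (s : Set Bool) :
    (ternaryTopology (RY X)).IsOpen {w : Yt X | w.1 p ∈ s} := by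
  by_cases ht : true ∈ s <;> by_cases hf : false ∈ s
  · have : {w : Yt X | w.1 p ∈ s} = Set.univ := by
      ext w; cases hc : w.1 p <;> simp [hc, ht, hf]
    rw [this]; exact GenerateOpen.univ
  · have : {w : Yt X | w.1 p ∈ s} = {w : Yt X | w.1 p = true} := by
      ext w; cases hc : w.1 p <;> simp [hc, ht, hf]
    rw [this]; exact isOpen_tern_cylTrue p
  · have : {w : Yt X | w.1 p ∈ s} = {w : Yt X | w.1 p = false} := by
      ext w; cases hc : w.1 p <;> simp [hc, ht, hf]
    rw [this]; exact isOpen_tern_cylFalse p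
  · have : {w : Yt X | w.1 p ∈ s} = (∅ : Set (Yt X)) := by
      ext w; cases hc : w.1 p <;> simp [hc, ht, hf]
    rw [this, ← Set.sUnion_empty]
    exact GenerateOpen.sUnion _ (fun u hu => absurd hu (Set.notMem_empty u))

theorem isOpen_tern_fininter (I : Finset (X × X)) (t : (X × X) → Set Bool) :
    (ternaryTopology (RY X)).IsOpen {w : Yt X | ∀ p ∈ I, w.1 p ∈ t p} := by
  classical
  induction I using Finset.induction_on with
  | empty =>
    have : {w : Yt X | ∀ p ∈ (∅ : Finset (X × X)), w.1 p ∈ t p} = Set.univ := by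
      ext w; simp
    rw [this]; exact GenerateOpen.univ
  | @insert q I hq ih =>
    have : {w : Yt X | ∀ p ∈ insert q I, w.1 p ∈ t p} =
        {w : Yt X | w.1 q ∈ t q} ∩ {w : Yt X | ∀ p ∈ I, w.1 p ∈ t p} := by
      ext w
      simp only [Set.mem_setOf_eq, Set.mem_inter_iff, Finset.mem_insert]
      constructor
      · exact fun h => ⟨h q (Or.inl rfl), fun p hp => h p (Or.inr hp)⟩
      · rintro ⟨h1, h2⟩ p (rfl | hp)
        · exact h1
        · exact h2 p hp
    rw [this]
    exact GenerateOpen.inter _ _ (isOpen_tern_coord_mem q (t q)) ih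

theorem topology_eq :
    (instTopologicalSpaceSubtype : TopologicalSpace (Yt X)) = ternaryTopology (RY X) := by
  apply le_antisymm
  · exact le_generateFrom_iff_subset_isOpen.2 (by
      rintro s ⟨u, v, rfl⟩
      exact (isClosed_ternIcc u v).isOpen_compl)
  · have h1 : (instTopologicalSpaceSubtype : TopologicalSpace (Yt X)) =
        TopologicalSpace.induced (Subtype.val) (Pi.topologicalSpace) := rfl
    rw [h1, pi_eq_generateFrom, induced_generateFrom_eq]
    apply le_generateFrom_iff_subset_isOpen.2
    rintro s ⟨g, ⟨t, I, htI, rfl⟩, rfl⟩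
    have : (Subtype.val ⁻¹' Set.pi (↑I) t : Set (Yt X)) =
        {w : Yt X | ∀ p ∈ I, w.1 p ∈ t p} := rfl
    rw [this]
    exact isOpen_tern_fininter I t

end CILC

namespace CILC

open Set Topology TopologicalSpace

variable {X : Type u} [CircularOrder X] {G : Type v} [Group G] [MulAction G X]

section Action

variable (hcop : ∀ (g : G) (a b c : X), sbtw a b c → sbtw (g • a) (g • b) (g • c))

/-- The action on the coordinate space. -/
def actP (g : G) : P X → P X := fun w p => w (g⁻¹ • p.1, g⁻¹ • p.2)

theorem actP_one (w : P X) : actP (X := X) (1 : G) w = w := by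
  funext p
  simp [actP]

theorem actP_comp (g h : G) (w : P X) :
    actP (X := X) (g * h) w = actP g (actP h w) := by
  funext p
  simp [actP, mul_smul]

theorem actP_continuous (g : G) : Continuous (actP (X := X) g) :=
  continuous_pi fun p => continuous_apply _

include hcop

theorem sbtw_smul_iff {g : G} {a b c : X} : sbtw (g • a) (g • b) (g • c) ↔ sbtw a b c := by
  refine ⟨fun h => ?_, hcop g a b c⟩
  have := hcop g⁻¹ _ _ _ h
  simpa [inv_smul_smul] using this

theorem btw_smul {g : G} {a b c : X} (h : btw a b c) : btw (g • a) (g • b) (g • c) := by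
  by_cases hs : sbtw a b c
  · exact (hcop g a b c hs).btw
  · have hcba : btw c b a := by
      by_contra hn
      exact hs (sbtw_of_btw_not_btw h hn)
    rcases h.antisymm hcba with he | he | he
    · rw [he]; exact btw_rfl_left
    · rw [← he]; exact btw_rfl_right
    · rw [he]; exact btw_rfl_left_right

theorem mem_K_smul {g : G} {a b x : X} : g • x ∈ K (g • a) (g • b) ↔ x ∈ K a b := by
  rw [mem_K_iff, mem_K_iff, sbtw_smul_iff hcop,
    (MulAction.injective g).eq_iff, (MulAction.injective g).eq_iff]

theorem actP_nuF (g : G) (x : X) : actP (X := X) g (nuF x) = nuF (g • x) := by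
  classical
  funext p
  have : (g • x ∈ K p.1 p.2) ↔ (x ∈ K (g⁻¹ • p.1) (g⁻¹ • p.2)) := by
    conv_lhs => rw [show p.1 = g • (g⁻¹ • p.1) from (smul_inv_smul g p.1).symm,
      show p.2 = g • (g⁻¹ • p.2) from (smul_inv_smul g p.2).symm]
    exact mem_K_smul hcop
  simp only [actP, nuF]
  exact decide_eq_decide.2 this.symm

theorem actP_mem_YS {g : G} {w : P X} (hw : w ∈ YS X) : actP (X := X) g w ∈ YS X := by
  have h1 : actP (X := X) g '' (Set.range nuF) ⊆ Set.range nuF := by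
    rintro _ ⟨_, ⟨x, rfl⟩, rfl⟩
    exact ⟨g • x, (actP_nuF hcop g x).symm⟩
  have h2 := image_closure_subset_closure_image (s := Set.range (nuF : X → P X))
    (actP_continuous (X := X) g)
  have := h2 ⟨w, hw, rfl⟩
  exact closure_mono h1 this

theorem btwP_actP {g : G} {u v w : P X} (h : btwP u v w) :
    btwP (actP (X := X) g u) (actP g v) (actP g w) := by
  classical
  rw [btwP_iff_realize] at h ⊢
  intro F
  obtain ⟨x, y, z, hxyz, h1, h2, h3⟩ := h (F.image (fun p => (g⁻¹ • p.1, g⁻¹ • p.2)))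
  refine ⟨g • x, g • y, g • z, btw_smul hcop hxyz, ?_, ?_, ?_⟩ <;>
  · intro p hp
    rw [← actP_nuF hcop]
    show nuF _ (g⁻¹ • p.1, g⁻¹ • p.2) = _
    first
    | exact h1 _ (Finset.mem_image_of_mem _ hp)
    | exact h2 _ (Finset.mem_image_of_mem _ hp)
    | exact h3 _ (Finset.mem_image_of_mem _ hp)

/-- The action on the compactification, as a group homomorphism to permutations. -/
noncomputable def actHom : G →* Equiv.Perm (Yt X) where
  toFun g :=
    { toFun := fun w => ⟨actP g w.1, actP_mem_YS hcop w.2⟩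
      invFun := fun w => ⟨actP g⁻¹ w.1, actP_mem_YS hcop w.2⟩
      left_inv := fun w => by
        apply Subtype.ext
        show actP g⁻¹ (actP g w.1) = w.1
        rw [← actP_comp, inv_mul_cancel, actP_one]
      right_inv := fun w => by
        apply Subtype.ext
        show actP g (actP g⁻¹ w.1) = w.1
        rw [← actP_comp, mul_inv_cancel, actP_one] }
  map_one' := by
    apply Equiv.ext
    intro w
    apply Subtype.ext
    show actP (1 : G) w.1 = w.1
    exact actP_one w.1
  map_mul' := fun g h => by
    apply Equiv.ext
    intro w
    apply Subtype.ext
    show actP (g * h) w.1 = actP g (actP h w.1)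
    exact actP_comp g h w.1

theorem actHom_apply (g : G) (w : Yt X) : ((actHom hcop g) w).1 = actP g w.1 := rfl

theorem actHom_nuY (g : G) (x : X) : nuY (g • x) = actHom hcop g (nuY x) :=
  Subtype.ext (actP_nuF hcop g x).symm

theorem actHom_sbtw {g : G} {u v w : Yt X} (h : RY X u v w) :
    RY X (actHom hcop g u) (actHom hcop g v) (actHom hcop g w) := by
  refine ⟨btwP_actP hcop h.1, fun h2 => h.2 ?_⟩
  have := btwP_actP (g := g⁻¹) hcop h2
  simp only [actHom_apply, ← actP_comp, inv_mul_cancel, actP_one] at this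
  exact this

theorem actHom_continuous (g : G) : Continuous (actHom hcop g) := by
  apply Continuous.subtype_mk
  exact (actP_continuous g).comp continuous_subtype_val

end Action

end CILC

namespace CILC

open Set Topology TopologicalSpace

variable {X : Type u} [CircularOrder X]

theorem dense_range_nuY : Dense (Set.range (nuY : X → Yt X)) := by
  intro w
  rw [mem_closure_iff_nhds]
  intro U hU
  rw [mem_nhds_subtype] at hU
  obtain ⟨V, hV, hVU⟩ := hU
  obtain ⟨F, hF⟩ := exists_cyl_subset hV
  obtain ⟨x, hx⟩ := realize w.2 F
  exact ⟨nuY x, hVU (hF fun p hp => hx p hp), ⟨x, rfl⟩⟩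

theorem discrete_range_nuY : DiscreteTopology (Set.range (nuY : X → Yt X)) := by
  apply discreteTopology_iff_isOpen_singleton.2
  rintro ⟨w, hw⟩
  obtain ⟨x, rfl⟩ := hw
  have hset : ({⟨nuY x, ⟨x, rfl⟩⟩} : Set (Set.range (nuY : X → Yt X))) =
      (Subtype.val : Set.range (nuY : X → Yt X) → Yt X) ⁻¹'
        {w : Yt X | w.1 (x, x) = true} := by
    ext z
    simp only [Set.mem_singleton_iff, Set.mem_preimage, Set.mem_setOf_eq]
    constructor
    · rintro rfl
      exact nuF_diag x
    · intro h
      apply Subtype.ext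
      have := cyl_diag_eq (X := X) x
      have hz : z.1 ∈ {w : Yt X | w.1 (x, x) = true} := h
      rw [this] at hz
      exact hz
  rw [hset]
  exact (isOpen_cylY (x, x) true).preimage continuous_subtype_val

theorem not_btwP_rev_of_sbtw {a b c : X} (h : sbtw a b c) :
    ¬btwP (nuF c) (nuF b) (nuF a) := by
  classical
  intro hb
  obtain ⟨x, y, z, hxyz, h1, h2, h3⟩ := btwP_iff_realize.1 hb {(a, a), (b, b), (c, c)}
  have hx : x = c := by
    have := h1 (c, c) (by simp)
    rw [nuF_diag c] at this
    have := nuF_eq_true_iff.1 this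
    rwa [K_self, Set.mem_singleton_iff] at this
  have hy : y = b := by
    have := h2 (b, b) (by simp)
    rw [nuF_diag b] at this
    have := nuF_eq_true_iff.1 this
    rwa [K_self, Set.mem_singleton_iff] at this
  have hz : z = a := by
    have := h3 (a, a) (by simp)
    rw [nuF_diag a] at this
    have := nuF_eq_true_iff.1 this
    rwa [K_self, Set.mem_singleton_iff] at this
  subst hx; subst hy; subst hz
  exact h.not_btw hxyz

variable {G : Type v} [Group G] [MulAction G X]

theorem actHom_joint_continuous
    (hcop : ∀ (g : G) (a b c : X), sbtw a b c → sbtw (g • a) (g • b) (g • c)) :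
    letI : TopologicalSpace G :=
      TopologicalSpace.induced (fun (g : G) (x : X) => g • x)
        (@Pi.topologicalSpace X (fun _ => X) (fun _ => ⊥))
    Continuous (fun q : G × Yt X => (actHom hcop q.1) q.2) := by
  letI tX : TopologicalSpace X := ⊥
  haveI : DiscreteTopology X := ⟨rfl⟩
  letI : TopologicalSpace G :=
    TopologicalSpace.induced (fun (g : G) (x : X) => g • x)
      (@Pi.topologicalSpace X (fun _ => X) (fun _ => ⊥))
  apply Continuous.subtype_mk
  apply continuous_pi
  intro p
  show Continuous fun q : G × Yt X => q.2.1 (q.1⁻¹ • p.1, q.1⁻¹ • p.2)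
  have hsmul : ∀ d : X, Continuous fun g : G => g⁻¹ • d := by
    intro d
    rw [continuous_discrete_rng]
    intro e
    have : (fun g : G => g⁻¹ • d) ⁻¹' {e} =
        (fun (g : G) (x : X) => g • x) ⁻¹' {f : X → X | f e = d} := by
      ext g
      simp only [Set.mem_preimage, Set.mem_singleton_iff, Set.mem_setOf_eq]
      constructor
      · rintro rfl; simp
      · intro h; rw [← h]; simp
    rw [this]
    have : IsOpen {f : X → X | f e = d} := by
      have := (continuous_apply (A := fun _ : X => X) e).isOpen_preimage {d} (isOpen_discrete _)
      exact this
    exact isOpen_induced this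
  have he : Continuous fun q : G × Yt X =>
      (((q.1⁻¹ • p.1, q.1⁻¹ • p.2), q.2.1) : (X × X) × P X) := by
    refine Continuous.prodMk (Continuous.prodMk ?_ ?_)
      (continuous_subtype_val.comp continuous_snd)
    · exact (hsmul p.1).comp continuous_fst
    · exact (hsmul p.2).comp continuous_fst
  have heval : Continuous fun r : (X × X) × P X => r.2 r.1 := by
    rw [continuous_discrete_rng]
    intro b
    have : (fun r : (X × X) × P X => r.2 r.1) ⁻¹' {b} =
        ⋃ i : X × X, ({i} ×ˢ {f : P X | f i = b}) := by
      ext ⟨i, f⟩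
      simp only [Set.mem_preimage, Set.mem_singleton_iff, Set.mem_iUnion, Set.mem_prod,
        Set.mem_setOf_eq]
      constructor
      · intro h; exact ⟨i, rfl, h⟩
      · rintro ⟨j, rfl, h⟩; exact h
    rw [this]
    refine isOpen_iUnion fun i => (isOpen_discrete _).prod ?_
    have := (continuous_apply (A := fun _ : X × X => Bool) i).isOpen_preimage {b}
      (isOpen_discrete _)
    exact this
  exact heval.comp he

end CILC


/-- Every effective `sbtw`-preserving action of a group `G` on a circularly
ordered set `X` extends to an action by circular-order preserving homeomorphisms on a compact
Hausdorff totally disconnected circularly ordered space `X∞` (whose topology is the circular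
topology), jointly continuous for the pointwise topology on `G` w.r.t. the discrete set `X`,
together with a `G`-equivariant injective circular-order preserving map `ν : X → X∞` with
dense, discrete image; if `X` is countable then `X∞` is metrizable. -/
theorem circular_inverse_limit_compactification
    {X : Type u} [CircularOrder X] {G : Type v} [Group G] [MulAction G X]
    (heff : ∀ g : G, (∀ x : X, g • x = x) → g = 1)
    (hcop : ∀ (g : G) (a b c : X), sbtw a b c → sbtw (g • a) (g • b) (g • c)) :
    ∃ (Y : Type u) (cY : CircularOrder Y) (tY : TopologicalSpace Y)
      (act : G →* Equiv.Perm Y) (ν : X → Y),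
      letI := tY
      letI : TopologicalSpace G :=
        TopologicalSpace.induced (fun (g : G) (x : X) => g • x)
          (@Pi.topologicalSpace X (fun _ => X) (fun _ => ⊥))
      tY = ternaryTopology (csbtw cY) ∧
      CompactSpace Y ∧ T2Space Y ∧ TotallyDisconnectedSpace Y ∧
      (∀ (g : G) (a b c : Y), csbtw cY a b c → csbtw cY (act g a) (act g b) (act g c)) ∧
      (∀ g : G, Continuous (act g)) ∧
      Continuous (fun p : G × Y => act p.1 p.2) ∧
      Function.Injective ν ∧
      (∀ (g : G) (x : X), ν (g • x) = act g (ν x)) ∧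
      IsCOP (fun a b c : X => sbtw a b c) (csbtw cY) ν ∧
      Dense (Set.range ν) ∧
      DiscreteTopology (Set.range ν) ∧
      (Countable X → TopologicalSpace.MetrizableSpace Y) := by
  classical
  refine ⟨CILC.Yt X, CILC.circY, instTopologicalSpaceSubtype, CILC.actHom hcop, CILC.nuY,
    ?_, ?_, ?_, ?_, ?_, ?_, ?_, ?_, ?_, ?_, ?_, ?_, ?_⟩
  · exact CILC.topology_eq
  · exact inferInstance
  · exact inferInstance
  · exact inferInstance
  · exact fun g a b c h => CILC.actHom_sbtw hcop h
  · exact fun g => CILC.actHom_continuous hcop g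
  · exact CILC.actHom_joint_continuous hcop
  · exact CILC.nuY_injective
  · exact fun g x => CILC.actHom_nuY hcop g x
  · constructor
    · intro a b c h _ _ _
      exact ⟨CILC.btwP_of_btw h.btw, CILC.not_btwP_rev_of_sbtw h⟩
    · intro a c h
      have hac : a = c := CILC.nuY_injective h
      subst hac
      left
      intro x hx
      have hx' : x ∈ CILC.K a a := hx
      rw [CILC.K_self] at hx'
      rw [hx']
  · exact CILC.dense_range_nuY
  · exact CILC.discrete_range_nuY
  · intro hX
    exact inferInstance
end
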